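/- arXiv:2103.04187 — 5 statements merged into one kernel-verified Lean document; each statement's English description precedes it below -/
import Mathlib

section
/- Lemma 3.1 (triangular structure). For all multi-indices γ, β over I the following hold. (a) If the z^β-coefficient of D^(0)(z^γ) is nonzero, then [γ]+1 = [β] and Σ_{𝐦≠0} |𝐦|·γ(𝐦) = Σ_{𝐦≠0} |𝐦|·β(𝐦). (b) For every 𝐧 ∈ ℕ²∖{0}: if the z^β-coefficient of D^(𝐧)(z^γ) is nonzero, then [γ]+1 = [β] and Σ_{𝐦≠0} |𝐦|·γ(𝐦) = Σ_{𝐦≠0} |𝐦|·β(𝐦) + |𝐧|. (c) If the z^β-coefficient of ∂₁(z^γ) is nonzero, then [γ] = [β] and Σ_{𝐦≠0} |𝐦|·γ(𝐦) + |(1,0)| = Σ_{𝐦≠0} |𝐦|·β(𝐦); the symmetric statement holds for ∂₂ with |(0,1)| in place of |(1,0)|. -/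
open MvPolynomial

abbrev N2 : Type := {p : ℕ × ℕ // p ≠ (0, 0)}
abbrev Idx : Type := ℕ ⊕ N2
abbrev MIdx : Type := Idx →₀ ℕ
abbrev PS : Type := MvPowerSeries Idx ℝ

noncomputable section

/-- the weight `|𝐧| = w₁ n₁ + w₂ n₂` of `𝐧 ∈ ℕ²`. -/
def wt (w₁ w₂ : ℝ) (n : ℕ × ℕ) : ℝ := w₁ * n.1 + w₂ * n.2

/-- `[γ] = Σ_k k γ(k) − Σ_{𝐧≠0} γ(𝐧)`. -/
def brk (γ : MIdx) : ℤ :=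
  γ.sum fun i n =>
    match i with
    | Sum.inl k => (k : ℤ) * n
    | Sum.inr _ => -(n : ℤ)

/-- `Σ_{𝐦≠0} |𝐦| γ(𝐦)`. -/
def wsum (w₁ w₂ : ℝ) (γ : MIdx) : ℝ :=
  γ.sum fun i n =>
    match i with
    | Sum.inl _ => 0
    | Sum.inr m => wt w₁ w₂ m.1 * n

/-- the homogeneity `|γ| = α([γ]+1) + Σ_{𝐧≠0}|𝐧|γ(𝐧)`. -/
def homdeg (α w₁ w₂ : ℝ) (γ : MIdx) : ℝ := α * ((brk γ : ℝ) + 1) + wsum w₁ w₂ γ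

/-! ### operators on monomials (polynomial level) -/

/-- `D^(0) z^γ = Σ_k (k+1) γ(k) z^{γ - e_k + e_{k+1}}`. -/
def D0mono (γ : MIdx) : MvPolynomial Idx ℝ :=
  γ.sum fun i n =>
    match i with
    | Sum.inl k =>
        (((k + 1) * n : ℕ) : ℝ) •
          monomial (γ - Finsupp.single (Sum.inl k) 1 + Finsupp.single (Sum.inl (k + 1)) 1) 1
    | Sum.inr _ => 0

/-- `D^(𝐧) z^γ = ∂_{z_𝐧} z^γ` for `𝐧 ≠ 0`. -/
def DNmono (m : N2) (γ : MIdx) : MvPolynomial Idx ℝ :=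
  ((γ (Sum.inr m) : ℕ) : ℝ) • monomial (γ - Finsupp.single (Sum.inr m) 1) 1

/-- `D^(𝐧) z^γ` for arbitrary `𝐧 ∈ ℕ²`. -/
def Dmono (n : ℕ × ℕ) (γ : MIdx) : MvPolynomial Idx ℝ :=
  if h : n = (0, 0) then D0mono γ else DNmono ⟨n, h⟩ γ

lemma add10_ne (n : ℕ × ℕ) : n + (1, 0) ≠ (0, 0) := by
  intro h
  exact Nat.succ_ne_zero n.1 (congrArg Prod.fst h)

lemma add01_ne (n : ℕ × ℕ) : n + (0, 1) ≠ (0, 0) := by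
  intro h
  exact Nat.succ_ne_zero n.2 (congrArg Prod.snd h)

def v10 : N2 := ⟨(1, 0), by decide⟩
def v01 : N2 := ⟨(0, 1), by decide⟩

/-- `∂₁ z^γ = z_{(1,0)} D^(0) z^γ + Σ_{𝐧≠0} (n₁+1) z_{𝐧+(1,0)} ∂_{z_𝐧} z^γ`. -/
def d1mono (γ : MIdx) : MvPolynomial Idx ℝ :=
  X (Sum.inr v10) * D0mono γ +
    γ.sum fun i n =>
      match i with
      | Sum.inl _ => 0
      | Sum.inr m =>
          (((m.1.1 + 1) * n : ℕ) : ℝ) •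
            monomial
              (γ - Finsupp.single (Sum.inr m) 1 +
                Finsupp.single (Sum.inr ⟨m.1 + (1, 0), add10_ne m.1⟩) 1) 1

/-- `∂₂ z^γ`. -/
def d2mono (γ : MIdx) : MvPolynomial Idx ℝ :=
  X (Sum.inr v01) * D0mono γ +
    γ.sum fun i n =>
      match i with
      | Sum.inl _ => 0
      | Sum.inr m =>
          (((m.1.2 + 1) * n : ℕ) : ℝ) •
            monomial
              (γ - Finsupp.single (Sum.inr m) 1 +
                Finsupp.single (Sum.inr ⟨m.1 + (0, 1), add01_ne m.1⟩) 1) 1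

/-! ### operators on power series (coefficientwise) -/

/-- coefficient of `D^(0) f` at `β`. -/
def D0coeff (f : PS) (β : MIdx) : ℝ :=
  ∑ i ∈ β.support,
    match i with
    | Sum.inl (k + 1) =>
        (((k + 1) * (β (Sum.inl k) + 1) : ℕ) : ℝ) *
          MvPowerSeries.coeff
            (β + Finsupp.single (Sum.inl k) 1 - Finsupp.single (Sum.inl (k + 1)) 1) f
    | _ => 0

/-- `D^(0)` on power series. -/
def D0series (f : PS) : PS := D0coeff f

/-- `D^(𝐧) = ∂_{z_𝐧}` on power series, `𝐧 ≠ 0`. -/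
def DNseries (m : N2) (f : PS) : PS :=
  fun β => ((β (Sum.inr m) + 1 : ℕ) : ℝ) *
    MvPowerSeries.coeff (β + Finsupp.single (Sum.inr m) 1) f

/-- `D^(𝐧)` on power series for arbitrary `𝐧 ∈ ℕ²`. -/
def Dseries (n : ℕ × ℕ) (f : PS) : PS :=
  if h : n = (0, 0) then D0series f else DNseries ⟨n, h⟩ f

/-- coefficient of `∂₁ f` at `β`. -/
def d1coeff (f : PS) (β : MIdx) : ℝ :=
  (if 1 ≤ β (Sum.inr v10) then D0coeff f (β - Finsupp.single (Sum.inr v10) 1) else 0) +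
    ∑ i ∈ β.support,
      match i with
      | Sum.inl _ => 0
      | Sum.inr p =>
          if hp : ((p.1.1 - 1, p.1.2) : ℕ × ℕ) ≠ (0, 0) ∧ 1 ≤ p.1.1 then
            (p.1.1 : ℝ) *
              ((((β - Finsupp.single (Sum.inr p) 1 : MIdx) (Sum.inr ⟨(p.1.1 - 1, p.1.2), hp.1⟩) : ℕ) + 1 : ℕ) : ℝ) *
              MvPowerSeries.coeff
                (β - Finsupp.single (Sum.inr p) 1 +
                  Finsupp.single (Sum.inr ⟨(p.1.1 - 1, p.1.2), hp.1⟩) 1) f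
          else 0

/-- `∂₁` on power series. -/
def d1series (f : PS) : PS := d1coeff f

/-- coefficient of `∂₂ f` at `β`. -/
def d2coeff (f : PS) (β : MIdx) : ℝ :=
  (if 1 ≤ β (Sum.inr v01) then D0coeff f (β - Finsupp.single (Sum.inr v01) 1) else 0) +
    ∑ i ∈ β.support,
      match i with
      | Sum.inl _ => 0
      | Sum.inr p =>
          if hp : ((p.1.1, p.1.2 - 1) : ℕ × ℕ) ≠ (0, 0) ∧ 1 ≤ p.1.2 then
            (p.1.2 : ℝ) *
              ((((β - Finsupp.single (Sum.inr p) 1 : MIdx) (Sum.inr ⟨(p.1.1, p.1.2 - 1), hp.1⟩) : ℕ) + 1 : ℕ) : ℝ) *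
              MvPowerSeries.coeff
                (β - Finsupp.single (Sum.inr p) 1 +
                  Finsupp.single (Sum.inr ⟨(p.1.1, p.1.2 - 1), hp.1⟩) 1) f
          else 0

/-- `∂₂` on power series. -/
def d2series (f : PS) : PS := d2coeff f

/-- the operator `z^γ·D^(𝐧)` on power series. -/
def opOf (γ : MIdx) (n : ℕ × ℕ) (f : PS) : PS :=
  MvPowerSeries.monomial γ (1 : ℝ) * Dseries n f

/-- the dual model space `T̃*`. -/
def Ttilde : Set PS := {f | ∀ γ : MIdx, MvPowerSeries.coeff γ f ≠ 0 → 0 ≤ brk γ}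

/-- the dual model space `T*`. -/
def Tstar : Set PS :=
  {f | ∀ γ : MIdx, MvPowerSeries.coeff γ f ≠ 0 →
      0 ≤ brk γ ∨ ∃ m : N2, γ = Finsupp.single (Sum.inr m) 1}

/-! ### topology and the realization property -/

instance : TopologicalSpace PS := inferInstanceAs (TopologicalSpace ((Idx →₀ ℕ) → ℝ))

/-- `Γ` realizes the family `(π^(𝐧))_{𝐧∈ℕ²}`. -/
def Realizes (Γ : PS →ₐ[ℝ] PS) (π : ℕ × ℕ → PS) : Prop :=
  Continuous Γ ∧
    (∀ m : N2, Γ (MvPowerSeries.X (Sum.inr m)) = MvPowerSeries.X (Sum.inr m) + π m.1) ∧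
    (∀ k : ℕ, HasSum
      (fun l : ℕ => ((k + l).choose k : ℝ) • (π (0, 0) ^ l * MvPowerSeries.X (Sum.inl (k + l))))
      (Γ (MvPowerSeries.X (Sum.inl k))))

end


section auxlemmas

variable (w₁ w₂ : ℝ)

lemma brk_add (a b : MIdx) : brk (a + b) = brk a + brk b := by
  unfold brk
  refine Finsupp.sum_add_index' (fun i => ?_) (fun i m n => ?_) <;>
    rcases i with k | m <;> push_cast <;> ring

lemma wsum_add (a b : MIdx) : wsum w₁ w₂ (a + b) = wsum w₁ w₂ a + wsum w₁ w₂ b := by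
  unfold wsum
  refine Finsupp.sum_add_index' (fun i => ?_) (fun i m n => ?_) <;>
    rcases i with k | m <;> push_cast <;> ring

lemma brk_single_inl (k n : ℕ) : brk (Finsupp.single (Sum.inl k : Idx) n) = k * n := by
  unfold brk; rw [Finsupp.sum_single_index] <;> simp

lemma brk_single_inr (m : N2) (n : ℕ) : brk (Finsupp.single (Sum.inr m : Idx) n) = -n := by
  unfold brk; rw [Finsupp.sum_single_index] <;> simp

lemma wsum_single_inl (k n : ℕ) : wsum w₁ w₂ (Finsupp.single (Sum.inl k : Idx) n) = 0 := by
  unfold wsum; rw [Finsupp.sum_single_index] <;> simp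

lemma wsum_single_inr (m : N2) (n : ℕ) :
    wsum w₁ w₂ (Finsupp.single (Sum.inr m : Idx) n) = wt w₁ w₂ m.1 * n := by
  unfold wsum; rw [Finsupp.sum_single_index] <;> simp

lemma brk_sub (γ : MIdx) (i : Idx) (h : 1 ≤ γ i) :
    brk (γ - Finsupp.single i 1) = brk γ - brk (Finsupp.single i 1) := by
  have hc : γ - Finsupp.single i 1 + Finsupp.single i 1 = γ :=
    tsub_add_cancel_of_le (Finsupp.single_le_iff.mpr h)
  have h2 := brk_add (γ - Finsupp.single i 1) (Finsupp.single i 1)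
  rw [hc] at h2; omega

lemma wsum_sub (γ : MIdx) (i : Idx) (h : 1 ≤ γ i) :
    wsum w₁ w₂ (γ - Finsupp.single i 1) = wsum w₁ w₂ γ - wsum w₁ w₂ (Finsupp.single i 1) := by
  have hc : γ - Finsupp.single i 1 + Finsupp.single i 1 = γ :=
    tsub_add_cancel_of_le (Finsupp.single_le_iff.mpr h)
  have h2 := wsum_add w₁ w₂ (γ - Finsupp.single i 1) (Finsupp.single i 1)
  rw [hc] at h2; linarith

lemma wt_add (a b : ℕ × ℕ) : wt w₁ w₂ (a + b) = wt w₁ w₂ a + wt w₁ w₂ b := by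
  simp only [wt, Prod.fst_add, Prod.snd_add]; push_cast; ring

lemma partA (γ β : MIdx) (h : MvPolynomial.coeff β (D0mono γ) ≠ 0) :
    brk γ + 1 = brk β ∧ wsum w₁ w₂ γ = wsum w₁ w₂ β := by
  unfold D0mono Finsupp.sum at h
  rw [MvPolynomial.coeff_sum] at h
  obtain ⟨i, hi, hne⟩ := Finset.exists_ne_zero_of_sum_ne_zero h
  rcases i with k | m
  · rw [MvPolynomial.coeff_smul, MvPolynomial.coeff_monomial] at hne
    split_ifs at hne with hβ
    · have hk : 1 ≤ γ (Sum.inl k) :=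
        Nat.one_le_iff_ne_zero.mpr (Finsupp.mem_support_iff.mp hi)
      constructor
      · rw [← hβ, brk_add, brk_sub _ _ hk, brk_single_inl, brk_single_inl]; push_cast; ring
      · rw [← hβ, wsum_add, wsum_sub _ _ _ _ hk, wsum_single_inl, wsum_single_inl]; ring
    · simp at hne
  · simp at hne

end auxlemmas

/-- **Lemma 3.1** (triangular structure). -/
theorem stmt0 (w₁ w₂ : ℝ) (hw₁ : 0 < w₁) (hw₂ : 0 < w₂) (γ β : MIdx) :
    (MvPolynomial.coeff β (D0mono γ) ≠ 0 →
        brk γ + 1 = brk β ∧ wsum w₁ w₂ γ = wsum w₁ w₂ β) ∧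
    (∀ m : N2, MvPolynomial.coeff β (DNmono m γ) ≠ 0 →
        brk γ + 1 = brk β ∧ wsum w₁ w₂ γ = wsum w₁ w₂ β + wt w₁ w₂ m.1) ∧
    (MvPolynomial.coeff β (d1mono γ) ≠ 0 →
        brk γ = brk β ∧ wsum w₁ w₂ γ + wt w₁ w₂ (1, 0) = wsum w₁ w₂ β) ∧
    (MvPolynomial.coeff β (d2mono γ) ≠ 0 →
        brk γ = brk β ∧ wsum w₁ w₂ γ + wt w₁ w₂ (0, 1) = wsum w₁ w₂ β) := by
  refine ⟨partA w₁ w₂ γ β, fun m h => ?_, fun h => ?_, fun h => ?_⟩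
  · -- part (b)
    unfold DNmono at h
    rw [MvPolynomial.coeff_smul, MvPolynomial.coeff_monomial] at h
    split_ifs at h with hβ
    · have hm : 1 ≤ γ (Sum.inr m) := by
        rcases Nat.eq_zero_or_pos (γ (Sum.inr m)) with h0 | h0
        · simp [h0] at h
        · exact h0
      constructor
      · rw [← hβ, brk_sub _ _ hm, brk_single_inr]; push_cast; ring
      · rw [← hβ, wsum_sub _ _ _ _ hm, wsum_single_inr]; push_cast; ring
    · simp at h
  · -- part (c), ∂₁
    unfold d1mono at h
    by_cases h1 : MvPolynomial.coeff β (MvPolynomial.X (Sum.inr v10) * D0mono γ) = 0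
    · rw [MvPolynomial.coeff_add, h1, zero_add] at h
      unfold Finsupp.sum at h
      rw [MvPolynomial.coeff_sum] at h
      obtain ⟨i, hi, hne⟩ := Finset.exists_ne_zero_of_sum_ne_zero h
      rcases i with k | m
      · simp at hne
      · rw [MvPolynomial.coeff_smul, MvPolynomial.coeff_monomial] at hne
        split_ifs at hne with hβ
        · have hm : 1 ≤ γ (Sum.inr m) :=
            Nat.one_le_iff_ne_zero.mpr (Finsupp.mem_support_iff.mp hi)
          constructor
          · rw [← hβ, brk_add, brk_sub _ _ hm, brk_single_inr, brk_single_inr]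
            push_cast; ring
          · rw [← hβ, wsum_add, wsum_sub _ _ _ _ hm, wsum_single_inr, wsum_single_inr]
            have hw : wt w₁ w₂ ((⟨m.1 + (1, 0), add10_ne m.1⟩ : N2)).1
                = wt w₁ w₂ m.1 + wt w₁ w₂ (1, 0) := wt_add w₁ w₂ m.1 (1, 0)
            rw [hw]; push_cast; ring
        · simp at hne
    · rw [MvPolynomial.coeff_X_mul'] at h1
      split_ifs at h1 with hs
      · have hb : 1 ≤ β (Sum.inr v10) :=
          Nat.one_le_iff_ne_zero.mpr (Finsupp.mem_support_iff.mp hs)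
        obtain ⟨e1, e2⟩ := partA w₁ w₂ γ _ h1
        rw [brk_sub _ _ hb, brk_single_inr] at e1
        rw [wsum_sub _ _ _ _ hb, wsum_single_inr] at e2
        have hv : wt w₁ w₂ v10.1 = wt w₁ w₂ (1, 0) := rfl
        rw [hv] at e2
        constructor
        · push_cast at e1; omega
        · push_cast at e2; linarith
      · exact absurd rfl h1
  · -- part (c), ∂₂
    unfold d2mono at h
    by_cases h1 : MvPolynomial.coeff β (MvPolynomial.X (Sum.inr v01) * D0mono γ) = 0
    · rw [MvPolynomial.coeff_add, h1, zero_add] at h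
      unfold Finsupp.sum at h
      rw [MvPolynomial.coeff_sum] at h
      obtain ⟨i, hi, hne⟩ := Finset.exists_ne_zero_of_sum_ne_zero h
      rcases i with k | m
      · simp at hne
      · rw [MvPolynomial.coeff_smul, MvPolynomial.coeff_monomial] at hne
        split_ifs at hne with hβ
        · have hm : 1 ≤ γ (Sum.inr m) :=
            Nat.one_le_iff_ne_zero.mpr (Finsupp.mem_support_iff.mp hi)
          constructor
          · rw [← hβ, brk_add, brk_sub _ _ hm, brk_single_inr, brk_single_inr]
            push_cast; ring
          · rw [← hβ, wsum_add, wsum_sub _ _ _ _ hm, wsum_single_inr, wsum_single_inr]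
            have hw : wt w₁ w₂ ((⟨m.1 + (0, 1), add01_ne m.1⟩ : N2)).1
                = wt w₁ w₂ m.1 + wt w₁ w₂ (0, 1) := wt_add w₁ w₂ m.1 (0, 1)
            rw [hw]; push_cast; ring
        · simp at hne
    · rw [MvPolynomial.coeff_X_mul'] at h1
      split_ifs at h1 with hs
      · have hb : 1 ≤ β (Sum.inr v01) :=
          Nat.one_le_iff_ne_zero.mpr (Finsupp.mem_support_iff.mp hs)
        obtain ⟨e1, e2⟩ := partA w₁ w₂ γ _ h1
        rw [brk_sub _ _ hb, brk_single_inr] at e1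
        rw [wsum_sub _ _ _ _ hb, wsum_single_inr] at e2
        have hv : wt w₁ w₂ v01.1 = wt w₁ w₂ (0, 1) := rfl
        rw [hv] at e2
        constructor
        · push_cast at e1; omega
        · push_cast at e2; linarith
      · exact absurd rfl h1
end

section
/- The shift transformations compose like addition in ℝ² (Proposition exp01, part v). For h = (h₁,h₂) ∈ ℝ², define π_h^(𝐧) ∈ R for each 𝐧 ∈ ℕ² to be the power series whose z^{e_𝐦}-coefficient equals binom(m₁,n₁)·binom(m₂,n₂)·h₁^{m₁−n₁}·h₂^{m₂−n₂} for every 𝐦 ∈ ℕ² with 𝐦 ≥ 𝐧 componentwise and 𝐦 ≠ 𝐧 (in particular 𝐦 ≠ 0), and all of whose other coefficients vanish. If Γ realizes (π_h^(𝐧))_{𝐧∈ℕ²} and Γ′ realizes (π_{h′}^(𝐧))_{𝐧∈ℕ²}, then Γ∘Γ′ realizes (π_{h+h′}^(𝐧))_{𝐧∈ℕ²}. -/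
open MvPolynomial

/-- `(π_h^(𝐧))_𝐧` is the tilt family of the shift by `h ∈ ℝ²`. -/
def IsShiftFamily (h : ℝ × ℝ) (π : ℕ × ℕ → PS) : Prop :=
  ∀ n : ℕ × ℕ,
    (∀ m : N2, n.1 ≤ m.1.1 → n.2 ≤ m.1.2 → m.1 ≠ n →
        MvPowerSeries.coeff (Finsupp.single (Sum.inr m) 1) (π n)
          = (m.1.1.choose n.1 : ℝ) * (m.1.2.choose n.2 : ℝ)
              * h.1 ^ (m.1.1 - n.1) * h.2 ^ (m.1.2 - n.2)) ∧
    (∀ γ : MIdx,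
        (¬ ∃ m : N2, n.1 ≤ m.1.1 ∧ n.2 ≤ m.1.2 ∧ m.1 ≠ n ∧
            γ = Finsupp.single (Sum.inr m) 1) →
        MvPowerSeries.coeff γ (π n) = 0)

noncomputable section

/-- 1-variable shift coefficient. -/
def A1 (x : ℝ) (a b : ℕ) : ℝ := if a ≤ b then (b.choose a : ℝ) * x ^ (b - a) else 0

lemma A1_self (x : ℝ) (a : ℕ) : A1 x a a = 1 := by simp [A1]

lemma A1_of_not_le {a b : ℕ} (h : ¬ a ≤ b) (x : ℝ) : A1 x a b = 0 := by simp [A1, h]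

lemma vander1 (x y : ℝ) (a b : ℕ) :
    ∑ t ∈ Finset.Icc a b, A1 x a t * A1 y t b = A1 (x + y) a b := by
  by_cases hab : a ≤ b
  · have hre : ∑ t ∈ Finset.Icc a b, A1 x a t * A1 y t b
        = ∑ s ∈ Finset.range (b - a + 1), A1 x a (a + s) * A1 y (a + s) b := by
      refine Finset.sum_nbij' (fun t => t - a) (fun s => a + s) ?_ ?_ ?_ ?_ ?_
      · intro t ht
        simp only [Finset.mem_Icc] at ht
        simp only [Finset.mem_range]
        omega
      · intro s hs
        simp only [Finset.mem_range] at hs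
        simp only [Finset.mem_Icc]
        omega
      · intro t ht; simp only [Finset.mem_Icc] at ht
        show a + (t - a) = t; omega
      · intro s hs
        show a + s - a = s; omega
      · intro t ht
        simp only [Finset.mem_Icc] at ht
        rw [show a + (t - a) = t by omega]
    rw [hre]
    have key : ∀ s ∈ Finset.range (b - a + 1),
        A1 x a (a + s) * A1 y (a + s) b
          = (b.choose a : ℝ) * ((b - a).choose s : ℝ) * (x ^ s * y ^ (b - a - s)) := by
      intro s hs
      simp only [Finset.mem_range] at hs
      have h1 : a ≤ a + s := Nat.le_add_right _ _
      have h2 : a + s ≤ b := by omega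
      have hch : (b.choose (a + s) : ℕ) * ((a + s).choose a) = b.choose a * (b - a).choose s := by
        have := Nat.choose_mul (n := b) h1
        simpa using this
      have hch' : ((b.choose (a + s) : ℝ)) * (((a + s).choose a : ℝ))
          = (b.choose a : ℝ) * ((b - a).choose s : ℝ) := by exact_mod_cast congrArg (Nat.cast (R := ℝ)) hch
      have hsub : b - (a + s) = b - a - s := by omega
      simp only [A1, if_pos h1, if_pos h2, Nat.add_sub_cancel_left, hsub]
      rw [← hch']
      ring
    rw [Finset.sum_congr rfl key]
    have hba : b - a + 1 = (b - a) + 1 := rfl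
    rw [A1, if_pos hab, add_pow]
    rw [Finset.mul_sum]
    refine Finset.sum_congr rfl ?_
    intro s hs
    ring
  · rw [Finset.Icc_eq_empty hab, Finset.sum_empty, A1_of_not_le hab]

/-- 2-variable shift coefficient. -/
def A2 (h : ℝ × ℝ) (n m : ℕ × ℕ) : ℝ := A1 h.1 n.1 m.1 * A1 h.2 n.2 m.2

lemma A2_self (h : ℝ × ℝ) (n : ℕ × ℕ) : A2 h n n = 1 := by simp [A2, A1_self]

lemma A2_of_not_le {n m : ℕ × ℕ} (hnm : ¬ n ≤ m) (h : ℝ × ℝ) : A2 h n m = 0 := by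
  rw [Prod.le_def, not_and_or] at hnm
  rcases hnm with hc | hc
  · rw [A2, A1_of_not_le hc, zero_mul]
  · rw [A2, A1_of_not_le hc, mul_zero]

lemma vander2 (h h' : ℝ × ℝ) (n m : ℕ × ℕ) :
    ∑ t ∈ Finset.Icc n m, A2 h' n t * A2 h t m = A2 (h + h') n m := by
  rw [Finset.Icc_prod_def, Finset.sum_product]
  have : ∀ t1 ∈ Finset.Icc n.1 m.1, ∀ t2 ∈ Finset.Icc n.2 m.2,
      A2 h' n (t1, t2) * A2 h (t1, t2) m
        = (A1 h'.1 n.1 t1 * A1 h.1 t1 m.1) * (A1 h'.2 n.2 t2 * A1 h.2 t2 m.2) := by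
    intro t1 _ t2 _; simp only [A2]; ring
  calc ∑ t1 ∈ Finset.Icc n.1 m.1, ∑ t2 ∈ Finset.Icc n.2 m.2,
        A2 h' n (t1, t2) * A2 h (t1, t2) m
      = ∑ t1 ∈ Finset.Icc n.1 m.1, ∑ t2 ∈ Finset.Icc n.2 m.2,
        (A1 h'.1 n.1 t1 * A1 h.1 t1 m.1) * (A1 h'.2 n.2 t2 * A1 h.2 t2 m.2) := by
        refine Finset.sum_congr rfl fun t1 h1 => Finset.sum_congr rfl fun t2 h2 => this t1 h1 t2 h2
    _ = (∑ t1 ∈ Finset.Icc n.1 m.1, A1 h'.1 n.1 t1 * A1 h.1 t1 m.1)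
          * (∑ t2 ∈ Finset.Icc n.2 m.2, A1 h'.2 n.2 t2 * A1 h.2 t2 m.2) := by
        rw [Finset.sum_mul_sum]
    _ = A2 (h + h') n m := by
        rw [vander1, vander1, A2, Prod.fst_add, Prod.snd_add, add_comm h.1 h'.1, add_comm h.2 h'.2]

namespace Stmt10Aux
open MvPowerSeries

instance : T2Space PS := inferInstanceAs (T2Space ((Idx →₀ ℕ) → ℝ))

lemma coeff_eq (γ : MIdx) (f : PS) : MvPowerSeries.coeff γ f = f γ := rfl

lemma hasSum_iff_coeff {ι : Type} (f : ι → PS) (g : PS) :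
    HasSum f g ↔ ∀ γ : MIdx,
      HasSum (fun i => MvPowerSeries.coeff γ (f i)) (MvPowerSeries.coeff γ g) := by
  exact Pi.hasSum

lemma zero_ne_single (μ : N2) : (0 : MIdx) ≠ Finsupp.single (Sum.inr μ) 1 := by
  intro hh
  have := DFunLike.congr_fun hh (Sum.inr μ)
  simp at this

lemma single_inr_inj {μ ν : N2}
    (hh : (Finsupp.single (Sum.inr μ) 1 : MIdx) = Finsupp.single (Sum.inr ν) 1) : μ = ν := by
  have := (Finsupp.single_left_inj (one_ne_zero)).1 hh
  exact Sum.inr_injective this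

/-- structure of the coefficients of a shift family member, at a single-variable monomial -/
lemma coeff_pi {h : ℝ × ℝ} {π : ℕ × ℕ → PS} (H : IsShiftFamily h π) (n : ℕ × ℕ) (μ : N2) :
    MvPowerSeries.coeff (Finsupp.single (Sum.inr μ) 1) (π n)
      = A2 h n μ.1 - (if μ.1 = n then 1 else 0) := by
  by_cases hc : n ≤ μ.1 ∧ μ.1 ≠ n
  · have h1 : n.1 ≤ μ.1.1 := hc.1.1
    have h2 : n.2 ≤ μ.1.2 := hc.1.2
    rw [(H n).1 μ h1 h2 hc.2, if_neg hc.2]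
    simp only [A2, A1, if_pos h1, if_pos h2, sub_zero]
    ring
  · rw [not_and_or] at hc
    have hz : MvPowerSeries.coeff (Finsupp.single (Sum.inr μ) 1) (π n) = 0 := by
      refine (H n).2 _ ?_
      rintro ⟨m, hm1, hm2, hm3, hm4⟩
      have : m = μ := single_inr_inj hm4.symm
      subst this
      rcases hc with hc | hc
      · exact hc ⟨hm1, hm2⟩
      · exact absurd hm3 hc
    rw [hz]
    rcases hc with hc | hc
    · rw [A2_of_not_le hc, if_neg (fun he => hc (le_of_eq he.symm)), sub_zero]
    · rw [not_not] at hc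
      rw [if_pos hc, hc, A2_self, sub_self]

lemma coeff_pi_ne {h : ℝ × ℝ} {π : ℕ × ℕ → PS} (H : IsShiftFamily h π) (n : ℕ × ℕ)
    (γ : MIdx) (hγ : ∀ μ : N2, γ ≠ Finsupp.single (Sum.inr μ) 1) :
    MvPowerSeries.coeff γ (π n) = 0 := by
  refine (H n).2 _ ?_
  rintro ⟨m, _, _, _, hm4⟩
  exact hγ m hm4

lemma constantCoeff_pi {h : ℝ × ℝ} {π : ℕ × ℕ → PS} (H : IsShiftFamily h π) (n : ℕ × ℕ) :
    MvPowerSeries.coeff 0 (π n) = 0 :=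
  coeff_pi_ne H n 0 (fun μ => zero_ne_single μ)

/-- an upper bound for the `ℕ`-indices appearing in a monomial -/
def B1 (γ : MIdx) : ℕ := γ.support.sup (fun i => match i with | .inl a => a | .inr _ => 0)

lemma le_B1 {γ : MIdx} {s : ℕ} (hs : γ (Sum.inl s) ≠ 0) : s ≤ B1 γ := by
  have : (Sum.inl s : Idx) ∈ γ.support := Finsupp.mem_support_iff.2 hs
  exact Finset.le_sup (f := fun i => match i with | .inl a => a | .inr _ => 0) this

lemma coeff_mul_X_eq_zero (f : PS) (s : ℕ) (γ : MIdx) (hs : B1 γ < s) :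
    MvPowerSeries.coeff γ (f * MvPowerSeries.X (Sum.inl s)) = 0 := by
  rw [MvPowerSeries.coeff_mul]
  refine Finset.sum_eq_zero ?_
  rintro ⟨p1, p2⟩ hp
  rw [Finset.HasAntidiagonal.mem_antidiagonal] at hp
  rw [MvPowerSeries.coeff_X]
  by_cases h2 : p2 = Finsupp.single (Sum.inl s) 1
  · exfalso
    have hγs : γ (Sum.inl s) ≠ 0 := by
      have := DFunLike.congr_fun hp (Sum.inl s)
      rw [Finsupp.add_apply, h2, Finsupp.single_apply, if_pos rfl] at this
      omega
    exact absurd (le_B1 hγs) (not_le.2 hs)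
  · rw [if_neg h2, mul_zero]

/-- total degree of a monomial -/
def degt (γ : MIdx) : ℕ := γ.sum (fun _ n => n)

lemma degt_add (a b : MIdx) : degt (a + b) = degt a + degt b :=
  Finsupp.sum_add_index' (fun _ => rfl) (fun _ _ _ => rfl)

lemma degt_pos {a : MIdx} (ha : a ≠ 0) : 1 ≤ degt a := by
  obtain ⟨i, hi⟩ := Finsupp.ne_iff.1 ha
  simp only [Finsupp.coe_zero, Pi.zero_apply] at hi
  have hi' : i ∈ a.support := Finsupp.mem_support_iff.2 hi
  have h2 : a i ≤ degt a :=
    Finset.single_le_sum (f := fun j => a j) (fun _ _ => Nat.zero_le _) hi'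
  omega

lemma coeff_pow_mul_eq_zero {g : PS} (hg : MvPowerSeries.coeff 0 g = 0) :
    ∀ l (γ : MIdx), degt γ < l → ∀ f : PS, MvPowerSeries.coeff γ (g ^ l * f) = 0 := by
  intro l
  induction l with
  | zero => intro γ hγ; omega
  | succ l ih =>
    intro γ hγ f
    have : g ^ (l + 1) * f = g * (g ^ l * f) := by ring
    rw [this, MvPowerSeries.coeff_mul]
    refine Finset.sum_eq_zero ?_
    rintro ⟨p1, p2⟩ hp
    rw [Finset.HasAntidiagonal.mem_antidiagonal] at hp
    by_cases h1 : p1 = 0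
    · rw [h1, hg, zero_mul]
    · have hd : degt p1 + degt p2 = degt γ := by rw [← degt_add, hp]
      have : degt p2 < l := by have := degt_pos h1; omega
      rw [ih p2 this f, mul_zero]

lemma continuous_mul_left (q : PS) : Continuous (fun f : PS => q * f) := by
  apply continuous_pi
  intro γ
  have : (fun f : PS => (q * f) γ)
      = fun f : PS => ∑ p ∈ Finset.HasAntidiagonal.antidiagonal γ,
          MvPowerSeries.coeff p.1 q * MvPowerSeries.coeff p.2 f := by
    funext f
    exact MvPowerSeries.coeff_mul γ q f
  rw [this]
  refine continuous_finset_sum _ ?_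
  intro p _
  exact continuous_const.mul (continuous_apply (p.2 : MIdx))

/-- coefficient of `X (inr μ) + πh μ` at a single monomial: exactly `A2`. -/
lemma coeff_X_add_pi {h : ℝ × ℝ} {π : ℕ × ℕ → PS} (H : IsShiftFamily h π) (μ ν : N2) :
    MvPowerSeries.coeff (Finsupp.single (Sum.inr ν) 1)
      ((MvPowerSeries.X (Sum.inr μ) : PS) + π μ.1) = A2 h μ.1 ν.1 := by
  rw [map_add, MvPowerSeries.coeff_X, coeff_pi H μ.1 ν]
  by_cases hμν : μ = ν
  · subst hμν
    rw [if_pos rfl, if_pos rfl]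
    ring
  · rw [if_neg (fun he => hμν (single_inr_inj he).symm),
      if_neg (fun he => hμν (Subtype.ext he.symm))]
    ring

/-- key lemma: `Γ` maps `πh' n` to `πhh' n - πh n`. -/
lemma Gamma_pi {h h' : ℝ × ℝ} {πh πh' πhh' : ℕ × ℕ → PS}
    (H : IsShiftFamily h πh) (H' : IsShiftFamily h' πh')
    (Hsum : IsShiftFamily (h + h') πhh')
    {Γ : PS →ₐ[ℝ] PS} (hΓ : Realizes Γ πh) (n : ℕ × ℕ) :
    Γ (πh' n) = πhh' n - πh n := by
  classical
  have h1 : HasSum (fun μ : N2 =>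
      (MvPowerSeries.coeff (Finsupp.single (Sum.inr μ) 1) (πh' n)) •
        (MvPowerSeries.X (Sum.inr μ) : PS)) (πh' n) := by
    rw [hasSum_iff_coeff]
    intro γ
    by_cases hγ : ∃ ν : N2, γ = Finsupp.single (Sum.inr ν) 1
    · obtain ⟨ν, rfl⟩ := hγ
      have hval : ∀ μ : N2, MvPowerSeries.coeff (Finsupp.single (Sum.inr ν) 1)
          ((MvPowerSeries.coeff (Finsupp.single (Sum.inr μ) 1) (πh' n)) •
            (MvPowerSeries.X (Sum.inr μ) : PS))
          = if μ = ν then MvPowerSeries.coeff (Finsupp.single (Sum.inr ν) 1) (πh' n)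
            else 0 := by
        intro μ
        rw [MvPowerSeries.coeff_smul, MvPowerSeries.coeff_X]
        by_cases hμν : μ = ν
        · subst hμν; rw [if_pos rfl, if_pos rfl, mul_one]
        · rw [if_neg (fun he => hμν (single_inr_inj he).symm), if_neg hμν, mul_zero]
      simp only [hval]
      exact hasSum_ite_eq ν _
    · push_neg at hγ
      have hval : ∀ μ : N2, MvPowerSeries.coeff γ
          ((MvPowerSeries.coeff (Finsupp.single (Sum.inr μ) 1) (πh' n)) •
            (MvPowerSeries.X (Sum.inr μ) : PS)) = 0 := by
        intro μ
        rw [MvPowerSeries.coeff_smul, MvPowerSeries.coeff_X, if_neg (hγ μ), mul_zero]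
      simp only [hval]
      rw [coeff_pi_ne H' n γ hγ]
      exact hasSum_zero
  have h2 : HasSum (fun μ : N2 =>
      Γ ((MvPowerSeries.coeff (Finsupp.single (Sum.inr μ) 1) (πh' n)) •
        (MvPowerSeries.X (Sum.inr μ) : PS))) (Γ (πh' n)) :=
    h1.map (Γ.toLinearMap.toAddMonoidHom) hΓ.1
  have heq : (fun μ : N2 =>
      Γ ((MvPowerSeries.coeff (Finsupp.single (Sum.inr μ) 1) (πh' n)) •
        (MvPowerSeries.X (Sum.inr μ) : PS)))
      = fun μ : N2 =>
        (MvPowerSeries.coeff (Finsupp.single (Sum.inr μ) 1) (πh' n)) •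
          ((MvPowerSeries.X (Sum.inr μ) : PS) + πh μ.1) := by
    funext μ
    rw [map_smul, hΓ.2.1 μ]
  rw [heq] at h2
  have h3 : HasSum (fun μ : N2 =>
      (MvPowerSeries.coeff (Finsupp.single (Sum.inr μ) 1) (πh' n)) •
        ((MvPowerSeries.X (Sum.inr μ) : PS) + πh μ.1)) (πhh' n - πh n) := by
    rw [hasSum_iff_coeff]
    intro γ
    by_cases hγ : ∃ ν : N2, γ = Finsupp.single (Sum.inr ν) 1
    · obtain ⟨ν, rfl⟩ := hγ
      set F : ℕ × ℕ → ℝ := fun p =>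
        (A2 h' n p - (if p = n then 1 else 0)) * A2 h p ν.1 with hF
      have hval : ∀ μ : N2, MvPowerSeries.coeff (Finsupp.single (Sum.inr ν) 1)
          ((MvPowerSeries.coeff (Finsupp.single (Sum.inr μ) 1) (πh' n)) •
            ((MvPowerSeries.X (Sum.inr μ) : PS) + πh μ.1)) = F μ.1 := by
        intro μ
        rw [MvPowerSeries.coeff_smul, coeff_X_add_pi H μ ν, coeff_pi H' n μ, hF]
      have htarget : MvPowerSeries.coeff (Finsupp.single (Sum.inr ν) 1) (πhh' n - πh n)
          = A2 (h + h') n ν.1 - A2 h n ν.1 := by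
        rw [map_sub, coeff_pi Hsum n ν, coeff_pi H n ν]
        ring
      simp only [hval]
      rw [htarget]
      have hfin : ∀ μ : N2, μ ∉ (Finset.Icc n ν.1).subtype (fun p => p ≠ (0, 0)) →
          F μ.1 = 0 := by
        intro μ hμ
        have hμ' : ¬ (n ≤ μ.1 ∧ μ.1 ≤ ν.1) := by
          intro hcon
          exact hμ (Finset.mem_subtype.2 (Finset.mem_Icc.2 hcon))
        simp only [hF]
        rcases not_and_or.1 hμ' with hc1 | hc1
        · rw [A2_of_not_le hc1, if_neg (fun he => hc1 (by rw [he])), sub_zero, zero_mul]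
        · rw [A2_of_not_le hc1, mul_zero]
      have hsum : HasSum (fun μ : N2 => F μ.1) _ := hasSum_sum_of_ne_finset_zero hfin
      have hval_sum : ∑ μ ∈ (Finset.Icc n ν.1).subtype (fun p => p ≠ (0, 0)), F μ.1
          = A2 (h + h') n ν.1 - A2 h n ν.1 := by
        rw [Finset.sum_subtype_eq_sum_filter]
        set G : ℕ × ℕ → ℝ := fun p => A2 h' n p * A2 h p ν.1 with hG
        have hGsum : ∑ p ∈ Finset.Icc n ν.1, G p = A2 (h + h') n ν.1 := vander2 h h' n ν.1
        by_cases hn : n = (0, 0)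
        · subst hn
          have h0mem : ((0, 0) : ℕ × ℕ) ∈ Finset.Icc ((0, 0) : ℕ × ℕ) ν.1 :=
            Finset.mem_Icc.2 ⟨le_refl _, ⟨Nat.zero_le _, Nat.zero_le _⟩⟩
          rw [Finset.filter_ne']
          have herase : ∑ p ∈ (Finset.Icc ((0, 0) : ℕ × ℕ) ν.1).erase (0, 0), F p
              = ∑ p ∈ (Finset.Icc ((0, 0) : ℕ × ℕ) ν.1).erase (0, 0), G p := by
            refine Finset.sum_congr rfl ?_
            intro p hp
            have hp0 : p ≠ (0, 0) := Finset.ne_of_mem_erase hp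
            simp only [hF, hG, if_neg hp0]
            ring
          rw [herase]
          have hadd := Finset.sum_erase_add (Finset.Icc ((0, 0) : ℕ × ℕ) ν.1) G h0mem
          have hG0 : G ((0, 0) : ℕ × ℕ) = A2 h (0, 0) ν.1 := by
            simp only [hG, A2_self]
            ring
          rw [← hGsum, ← hadd, hG0]
          ring
        · rw [Finset.filter_true_of_mem (fun p hp hp0 => by
            have hnp : n ≤ p := (Finset.mem_Icc.1 hp).1
            rw [hp0] at hnp
            exact hn (Prod.ext (Nat.le_zero.1 hnp.1) (Nat.le_zero.1 hnp.2)))]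
          have hFG : ∀ p ∈ Finset.Icc n ν.1,
              F p = G p - (if p = n then A2 h n ν.1 else 0) := by
            intro p _
            by_cases hpn : p = n
            · subst hpn
              simp [hF, hG, A2_self]
            · simp only [hF, hG, if_neg hpn]
              ring
          rw [Finset.sum_congr rfl hFG, Finset.sum_sub_distrib, hGsum,
            Finset.sum_ite_eq' _ n (fun _ => A2 h n ν.1)]
          by_cases hmem : n ∈ Finset.Icc n ν.1
          · rw [if_pos hmem]
          · rw [if_neg hmem]
            have hnν : ¬ n ≤ ν.1 := fun hle => hmem (Finset.mem_Icc.2 ⟨le_refl _, hle⟩)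
            rw [A2_of_not_le hnν (h + h'), A2_of_not_le hnν h]

      rw [← hval_sum]
      exact hsum
    · push_neg at hγ
      have hval : ∀ μ : N2, MvPowerSeries.coeff γ
          ((MvPowerSeries.coeff (Finsupp.single (Sum.inr μ) 1) (πh' n)) •
            ((MvPowerSeries.X (Sum.inr μ) : PS) + πh μ.1)) = 0 := by
        intro μ
        rw [MvPowerSeries.coeff_smul, map_add, MvPowerSeries.coeff_X, if_neg (hγ μ),
          coeff_pi_ne H μ.1 γ hγ, add_zero, mul_zero]
      simp only [hval]
      have : MvPowerSeries.coeff γ (πhh' n - πh n) = 0 := by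
        rw [map_sub, coeff_pi_ne Hsum n γ hγ, coeff_pi_ne H n γ hγ, sub_zero]
      rw [this]
      exact hasSum_zero
  exact h2.unique h3

/-- the realization property on the `ℕ`-variables for the composition. -/
lemma realize_nat {h h' : ℝ × ℝ} {πh πh' πhh' : ℕ × ℕ → PS}
    (H : IsShiftFamily h πh) (H' : IsShiftFamily h' πh')
    (Hsum : IsShiftFamily (h + h') πhh')
    {Γ Γ' : PS →ₐ[ℝ] PS} (hΓ : Realizes Γ πh) (hΓ' : Realizes Γ' πh') (k : ℕ) :
    HasSum (fun L : ℕ => ((k + L).choose k : ℝ) •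
        (πhh' (0, 0) ^ L * MvPowerSeries.X (Sum.inl (k + L))))
      ((Γ.comp Γ') (MvPowerSeries.X (Sum.inl k))) := by
  classical
  set g : PS := πhh' (0, 0) - πh (0, 0) with hg
  set p : PS := πh (0, 0) with hp
  have hgp : g + p = πhh' (0, 0) := by rw [hg, hp]; ring
  have hg0 : MvPowerSeries.coeff 0 g = 0 := by
    rw [hg, map_sub, constantCoeff_pi Hsum, constantCoeff_pi H, sub_zero]
  have hΓpi0 : Γ (πh' (0, 0)) = g := Gamma_pi H H' Hsum hΓ (0, 0)
  have hu0 := (hΓ'.2.2 k).map (Γ.toLinearMap.toAddMonoidHom) hΓ.1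
  have hu : HasSum (fun l : ℕ => ((k + l).choose k : ℝ) •
      (g ^ l * Γ (MvPowerSeries.X (Sum.inl (k + l)))))
      ((Γ.comp Γ') (MvPowerSeries.X (Sum.inl k))) := by
    have hfun : (fun l : ℕ => Γ (((k + l).choose k : ℝ) •
        (πh' (0, 0) ^ l * MvPowerSeries.X (Sum.inl (k + l)))))
        = fun l : ℕ => ((k + l).choose k : ℝ) •
          (g ^ l * Γ (MvPowerSeries.X (Sum.inl (k + l)))) := by
      funext l
      rw [map_smul, map_mul, map_pow, hΓpi0]
    have hu0' : HasSum (fun l : ℕ => Γ (((k + l).choose k : ℝ) •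
        (πh' (0, 0) ^ l * MvPowerSeries.X (Sum.inl (k + l)))))
        (Γ (Γ' (MvPowerSeries.X (Sum.inl k)))) := hu0
    rw [hfun] at hu0'
    rw [AlgHom.comp_apply]
    exact hu0'
  rw [hasSum_iff_coeff]
  intro γ
  set N : ℕ := B1 γ + degt γ with hN
  have hNB : B1 γ ≤ N := Nat.le_add_right _ _
  have hNd : degt γ ≤ N := Nat.le_add_left _ _
  set w : ℕ → ℕ → PS := fun l j => ((k + l).choose k : ℝ) •
      (((k + l + j).choose (k + l) : ℝ) •
        (g ^ l * (p ^ j * MvPowerSeries.X (Sum.inl (k + l + j))))) with hw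
  have hwl : ∀ l : ℕ, HasSum
      (fun j : ℕ => g ^ l * (((k + l + j).choose (k + l) : ℝ) •
        (p ^ j * MvPowerSeries.X (Sum.inl (k + l + j)))))
      (g ^ l * Γ (MvPowerSeries.X (Sum.inl (k + l)))) := fun l =>
    (hΓ.2.2 (k + l)).map (AddMonoidHom.mulLeft (g ^ l)) (continuous_mul_left _)
  have hcoeff_u : ∀ l : ℕ, MvPowerSeries.coeff γ
      (((k + l).choose k : ℝ) • (g ^ l * Γ (MvPowerSeries.X (Sum.inl (k + l)))))
      = ∑ j ∈ Finset.range (N + 1), MvPowerSeries.coeff γ (w l j) := by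
    intro l
    have h1 := (hasSum_iff_coeff _ _).1 (hwl l) γ
    have h2 : ∀ j ∉ Finset.range (N + 1),
        MvPowerSeries.coeff γ (g ^ l * (((k + l + j).choose (k + l) : ℝ) •
          (p ^ j * MvPowerSeries.X (Sum.inl (k + l + j))))) = 0 := by
      intro j hj
      rw [Finset.mem_range, not_lt] at hj
      have hB : B1 γ < k + l + j := by omega
      have hre : g ^ l * (((k + l + j).choose (k + l) : ℝ) •
          (p ^ j * MvPowerSeries.X (Sum.inl (k + l + j))))
          = ((k + l + j).choose (k + l) : ℝ) •
            ((g ^ l * p ^ j) * MvPowerSeries.X (Sum.inl (k + l + j))) := by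
        rw [mul_smul_comm, mul_assoc]
      rw [hre, MvPowerSeries.coeff_smul, coeff_mul_X_eq_zero _ _ _ hB, mul_zero]
    have h3 := h1.unique (hasSum_sum_of_ne_finset_zero h2)
    rw [MvPowerSeries.coeff_smul, h3, Finset.mul_sum]
    refine Finset.sum_congr rfl fun j _ => ?_
    rw [hw]
    simp only []
    rw [mul_smul_comm, MvPowerSeries.coeff_smul, MvPowerSeries.coeff_smul,
      MvPowerSeries.coeff_smul]
  have hW0 : ∀ l j : ℕ, N < l + j → MvPowerSeries.coeff γ (w l j) = 0 := by
    intro l j hlj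
    by_cases hl : degt γ < l
    · rw [hw]
      simp only []
      rw [MvPowerSeries.coeff_smul, MvPowerSeries.coeff_smul,
        coeff_pow_mul_eq_zero hg0 l γ hl _, mul_zero, mul_zero]
    · have hB : B1 γ < k + l + j := by omega
      have hre : g ^ l * (p ^ j * MvPowerSeries.X (Sum.inl (k + l + j)))
          = (g ^ l * p ^ j) * MvPowerSeries.X (Sum.inl (k + l + j)) := (mul_assoc _ _ _).symm
      rw [hw]
      simp only []
      rw [hre, MvPowerSeries.coeff_smul, MvPowerSeries.coeff_smul,
        coeff_mul_X_eq_zero _ _ _ hB, mul_zero, mul_zero]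
  have hdiag : ∀ L : ℕ, ∑ q ∈ Finset.HasAntidiagonal.antidiagonal L, w q.1 q.2
      = ((k + L).choose k : ℝ) • (πhh' (0, 0) ^ L * MvPowerSeries.X (Sum.inl (k + L))) := by
    intro L
    rw [Finset.Nat.sum_antidiagonal_eq_sum_range_succ (fun l j => w l j)]
    have hsummand : ∀ l ∈ Finset.range (L + 1), w l (L - l)
        = ((k + L).choose k : ℝ) • ((L.choose l : ℝ) •
            ((g ^ l * p ^ (L - l)) * MvPowerSeries.X (Sum.inl (k + L)))) := by
      intro l hl
      rw [Finset.mem_range] at hl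
      have hlL : l ≤ L := by omega
      have hk : k + l + (L - l) = k + L := by omega
      have hchoose : ((k + l).choose k : ℝ) * (((k + L).choose (k + l)) : ℝ)
          = ((k + L).choose k : ℝ) * ((L.choose l) : ℝ) := by
        have hid := Nat.choose_mul (n := k + L) (show k ≤ k + l by omega)
        have h1 : k + L - k = L := by omega
        have h2 : k + l - k = l := by omega
        rw [h1, h2] at hid
        have := congrArg (Nat.cast (R := ℝ)) hid
        push_cast at this
        linarith [this]
      rw [hw]
      simp only []
      rw [hk, smul_smul, smul_smul, mul_assoc (g ^ l) (p ^ (L - l)), ← mul_assoc (g ^ l),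
        hchoose]
    rw [Finset.sum_congr rfl hsummand, ← Finset.smul_sum]
    congr 1
    have hterm : ∀ l ∈ Finset.range (L + 1),
        (L.choose l : ℝ) • ((g ^ l * p ^ (L - l)) * MvPowerSeries.X (Sum.inl (k + L)))
        = ((L.choose l : ℝ) • (g ^ l * p ^ (L - l))) * MvPowerSeries.X (Sum.inl (k + L)) := by
      intro l _
      rw [smul_mul_assoc]
    rw [Finset.sum_congr rfl hterm, ← Finset.sum_mul]
    congr 1
    rw [← hgp, add_pow]
    refine Finset.sum_congr rfl fun l _ => ?_
    rw [Algebra.smul_def, map_natCast]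
    ring
  have hT0 : ∀ L ∉ Finset.range (N + 1), MvPowerSeries.coeff γ
      (((k + L).choose k : ℝ) •
        (πhh' (0, 0) ^ L * MvPowerSeries.X (Sum.inl (k + L)))) = 0 := by
    intro L hL
    rw [Finset.mem_range, not_lt] at hL
    have hB : B1 γ < k + L := by omega
    rw [MvPowerSeries.coeff_smul, coeff_mul_X_eq_zero _ _ _ hB, mul_zero]
  have hU0 : ∀ l ∉ Finset.range (N + 1), MvPowerSeries.coeff γ
      (((k + l).choose k : ℝ) • (g ^ l * Γ (MvPowerSeries.X (Sum.inl (k + l))))) = 0 := by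
    intro l hl
    rw [Finset.mem_range, not_lt] at hl
    have hld : degt γ < l := by omega
    rw [MvPowerSeries.coeff_smul, coeff_pow_mul_eq_zero hg0 l γ hld _, mul_zero]
  have hu_γ := (hasSum_iff_coeff _ _).1 hu γ
  have hval : MvPowerSeries.coeff γ ((Γ.comp Γ') (MvPowerSeries.X (Sum.inl k)))
      = ∑ l ∈ Finset.range (N + 1), MvPowerSeries.coeff γ
          (((k + l).choose k : ℝ) • (g ^ l * Γ (MvPowerSeries.X (Sum.inl (k + l))))) :=
    hu_γ.unique (hasSum_sum_of_ne_finset_zero hU0)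
  have hdisj : (↑(Finset.range (N + 1)) : Set ℕ).PairwiseDisjoint
      (fun L => Finset.HasAntidiagonal.antidiagonal L) := by
    intro a _ b _ hab
    refine Finset.disjoint_left.2 ?_
    intro x hxa hxb
    exact hab ((Finset.HasAntidiagonal.mem_antidiagonal.1 hxa).symm.trans (Finset.HasAntidiagonal.mem_antidiagonal.1 hxb))
  have hsub : (Finset.range (N + 1)).biUnion (fun L => Finset.HasAntidiagonal.antidiagonal L)
      ⊆ Finset.range (N + 1) ×ˢ Finset.range (N + 1) := by
    intro q hq
    rw [Finset.mem_biUnion] at hq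
    obtain ⟨L, hL, hqL⟩ := hq
    rw [Finset.mem_range] at hL
    have hsum := Finset.HasAntidiagonal.mem_antidiagonal.1 hqL
    rw [Finset.mem_product, Finset.mem_range, Finset.mem_range]
    omega
  have hchain : ∑ l ∈ Finset.range (N + 1), MvPowerSeries.coeff γ
        (((k + l).choose k : ℝ) • (g ^ l * Γ (MvPowerSeries.X (Sum.inl (k + l)))))
      = ∑ L ∈ Finset.range (N + 1), MvPowerSeries.coeff γ
          (((k + L).choose k : ℝ) •
            (πhh' (0, 0) ^ L * MvPowerSeries.X (Sum.inl (k + L)))) := by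
    rw [Finset.sum_congr rfl (fun l _ => hcoeff_u l), ← Finset.sum_product']
    have htri : ∑ q ∈ Finset.range (N + 1) ×ˢ Finset.range (N + 1),
          MvPowerSeries.coeff γ (w q.1 q.2)
        = ∑ q ∈ (Finset.range (N + 1)).biUnion (fun L => Finset.HasAntidiagonal.antidiagonal L),
            MvPowerSeries.coeff γ (w q.1 q.2) := by
      refine (Finset.sum_subset hsub ?_).symm
      intro q hq hq2
      by_cases hqN : q.1 + q.2 ≤ N
      · exfalso
        refine hq2 (Finset.mem_biUnion.2 ⟨q.1 + q.2, ?_, Finset.HasAntidiagonal.mem_antidiagonal.2 rfl⟩)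
        rw [Finset.mem_range]
        omega
      · exact hW0 q.1 q.2 (by omega)
    rw [htri, Finset.sum_biUnion hdisj]
    refine Finset.sum_congr rfl fun L _ => ?_
    rw [← map_sum, hdiag L]
  rw [hval, hchain]
  exact hasSum_sum_of_ne_finset_zero hT0

end Stmt10Aux

/-- **The shift transformations compose like addition in ℝ².** -/
theorem stmt10 (h h' : ℝ × ℝ) (πh πh' πhh' : ℕ × ℕ → PS)
    (H : IsShiftFamily h πh) (H' : IsShiftFamily h' πh')
    (Hsum : IsShiftFamily (h + h') πhh')
    (Γ Γ' : PS →ₐ[ℝ] PS) (hΓ : Realizes Γ πh) (hΓ' : Realizes Γ' πh') :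
    Realizes (Γ.comp Γ') πhh' := by
  refine ⟨?_, ?_, ?_⟩
  · rw [AlgHom.coe_comp]
    exact hΓ.1.comp hΓ'.1
  · intro m
    rw [AlgHom.comp_apply, hΓ'.2.1 m, map_add, hΓ.2.1 m,
      Stmt10Aux.Gamma_pi H H' Hsum hΓ m.1]
    ring
  · intro k
    exact Stmt10Aux.realize_nat H H' Hsum hΓ hΓ' k
end
end

section
/- Population condition for the canonical lift of a driven ODE (condition (ckh03)). Let ξ : ℝ → ℝ be any function and let Π assign to every multi-index β (a finitely supported function β : ℕ → ℕ) a function Π_β : ℝ → ℝ such that for every β: Π_β is differentiable on ℝ, Π_β(0) = 0, and for every x ∈ ℝ the derivative satisfies Π_β′(x) = ( Σ_{k∈ℕ} Σ_{(β₁,…,β_k)} Π_{β₁}(x)···Π_{β_k}(x) )·ξ(x), where the inner sum runs over ordered k-tuples of multi-indices with e_k + β₁ + ⋯ + β_k = β (a finite set; the empty product for k = 0 is 1, so the k = 0 term equals 1 exactly when β = e₀). Then for every multi-index β: if Π_β is not identically zero, then Σ_{k∈ℕ} (k−1)·β(k) = −1. -/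
noncomputable def Wh : (ℕ →₀ ℕ) →+ ℤ :=
  Finsupp.liftAddHom fun i => (AddMonoidHom.mulLeft ((i : ℤ) - 1)).comp (Nat.castAddMonoidHom ℤ)

noncomputable def Dh : (ℕ →₀ ℕ) →+ ℕ :=
  Finsupp.liftAddHom fun _ => AddMonoidHom.id ℕ

theorem Wh_apply (β : ℕ →₀ ℕ) : Wh β = β.sum fun i n => ((i : ℤ) - 1) * n := rfl

theorem Dh_apply (β : ℕ →₀ ℕ) : Dh β = β.sum fun _ n => n := rfl

theorem stmt12_key (ξ : ℝ → ℝ) (Pmap : (ℕ →₀ ℕ) → ℝ → ℝ)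
    (hdiff : ∀ β : ℕ →₀ ℕ, Differentiable ℝ (Pmap β))
    (hinit : ∀ β : ℕ →₀ ℕ, Pmap β 0 = 0)
    (hode : ∀ (β : ℕ →₀ ℕ) (x : ℝ),
      deriv (Pmap β) x =
        (∑ᶠ k : ℕ, ∑ᶠ t ∈ {t : Fin k → (ℕ →₀ ℕ) |
            Finsupp.single k 1 + ∑ j, t j = β}, ∏ j, Pmap (t j) x) * ξ x) :
    ∀ n : ℕ, ∀ β : ℕ →₀ ℕ, Dh β = n → Wh β ≠ -1 → Pmap β = 0 := by
  intro n
  induction n using Nat.strong_induction_on with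
  | _ n ih =>
    intro β hD hW
    have hderiv : ∀ x : ℝ, deriv (Pmap β) x = 0 := by
      intro x
      rw [hode β x]
      have hsum : (∑ᶠ k : ℕ, ∑ᶠ t ∈ {t : Fin k → (ℕ →₀ ℕ) |
            Finsupp.single k 1 + ∑ j, t j = β}, ∏ j, Pmap (t j) x) = 0 := by
        apply finsum_eq_zero_of_forall_eq_zero
        intro k
        apply finsum_mem_of_eqOn_zero
        intro t ht
        simp only [Set.mem_setOf_eq] at ht
        -- find a factor that vanishes
        have hWβ : Wh β = ((k : ℤ) - 1) + ∑ j, Wh (t j) := by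
          rw [← ht, map_add, map_sum]
          congr 1
          rw [Wh_apply, Finsupp.sum_single_index (by simp)]
          simp
        have hDβ : Dh β = 1 + ∑ j, Dh (t j) := by
          rw [← ht, map_add, map_sum]
          congr 1
          rw [Dh_apply, Finsupp.sum_single_index rfl]
        obtain ⟨j, hj⟩ : ∃ j : Fin k, Wh (t j) ≠ -1 := by
          by_contra h
          push_neg at h
          apply hW
          rw [hWβ]
          simp [h, Finset.sum_const]
          ring
        have hDj : Dh (t j) < n := by
          have h1 : Dh (t j) ≤ ∑ j, Dh (t j) :=
            Finset.single_le_sum (f := fun j => Dh (t j)) (fun i _ => Nat.zero_le _) (Finset.mem_univ j)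
          omega
        have : Pmap (t j) = 0 := ih _ hDj (t j) rfl hj
        exact Finset.prod_eq_zero (Finset.mem_univ j) (by rw [this]; rfl)
      rw [hsum, zero_mul]
    funext x
    have := is_const_of_deriv_eq_zero (hdiff β) hderiv x 0
    rw [hinit β] at this
    simpa using this

/-- **Population condition for the canonical lift of a driven ODE** (condition (ckh03)).
If the hierarchy `Π_β' = (Σ_k Σ_{e_k+β₁+⋯+β_k=β} Π_{β₁}⋯Π_{β_k})·ξ`, `Π_β(0) = 0`
holds, then any non-vanishing component `Π_β` satisfies `Σ_k (k−1)β(k) = −1`. -/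
theorem stmt12 (ξ : ℝ → ℝ) (Pmap : (ℕ →₀ ℕ) → ℝ → ℝ)
    (hdiff : ∀ β : ℕ →₀ ℕ, Differentiable ℝ (Pmap β))
    (hinit : ∀ β : ℕ →₀ ℕ, Pmap β 0 = 0)
    (hode : ∀ (β : ℕ →₀ ℕ) (x : ℝ),
      deriv (Pmap β) x =
        (∑ᶠ k : ℕ, ∑ᶠ t ∈ {t : Fin k → (ℕ →₀ ℕ) |
            Finsupp.single k 1 + ∑ j, t j = β}, ∏ j, Pmap (t j) x) * ξ x)
    (β : ℕ →₀ ℕ) (hβ : Pmap β ≠ 0) :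
    (∑ i ∈ β.support, ((i : ℤ) - 1) * (β i : ℤ)) = -1 := by
  by_contra h
  exact hβ (stmt12_key ξ Pmap hdiff hinit hode (Dh β) β rfl (by rw [Wh_apply]; exact h))
end

section
/- Transformation maps for renormalization (Lemma 6.5). Let E be the derivation of R₂ with E z_k^0 = (k+1) z_{k+1}^0 and E z_k^1 = (k+1) z_{k+1}^1, extended coefficientwise to power series (E is continuous). Let c ∈ R₂ be supported on monomials in the z^1-variables only (its z^γ-coefficient vanishes whenever γ(0,k) ≠ 0 for some k), and suppose M : R₂ → R₂ is a continuous ℝ-algebra homomorphism with M(z_k^0) = z_k^0 + (1/k!)·E^k(c) and M(z_k^1) = z_k^1 for all k ∈ ℕ. Then: (i) M∘E = E∘M; (ii) for all π₁, π₂ ∈ R₂, M(π₁·E(π₂)) = M(π₁)·E(M(π₂)); (iii) if M′ is a continuous ℝ-algebra homomorphism of the same form with parameter c′ (also supported on the z^1-variables), then (M∘M′)(z_k^0) = z_k^0 + (1/k!)·E^k(c+c′) and (M∘M′)(z_k^1) = z_k^1 for all k, i.e. M∘M′ is of the same form with parameter c + c′. -/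
abbrev I2 : Type := Fin 2 × ℕ
abbrev PS2 : Type := MvPowerSeries I2 ℝ

noncomputable section

/-- coefficient of `E f` at `β`, where `E z_k^i = (k+1) z_{k+1}^i` is extended as a
derivation, coefficientwise to power series. -/
def E2coeff (f : PS2) (β : I2 →₀ ℕ) : ℝ :=
  ∑ p ∈ β.support,
    match p with
    | (i, k + 1) =>
        (((k + 1) * ((β (i, k) : ℕ) + 1) : ℕ) : ℝ) *
          MvPowerSeries.coeff
            (β + Finsupp.single (i, k) 1 - Finsupp.single (i, k + 1) 1) f
    | (_, 0) => 0

/-- the derivation `E` with `E z_k^i = (k+1) z_{k+1}^i`, on power series. -/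
def E2 (f : PS2) : PS2 := E2coeff f

instance : TopologicalSpace PS2 := inferInstanceAs (TopologicalSpace ((I2 →₀ ℕ) → ℝ))

/-- `c` is supported on monomials in the `z^1`-variables only. -/
def OnlyZ1 (c : PS2) : Prop :=
  ∀ γ : I2 →₀ ℕ, (∃ k : ℕ, γ (0, k) ≠ 0) → MvPowerSeries.coeff γ c = 0

/-- `M` is the transformation map with parameter `c`:
`M z_k^0 = z_k^0 + (1/k!)·E^k c` and `M z_k^1 = z_k^1`. -/
def IsRenorm (M : PS2 →ₐ[ℝ] PS2) (c : PS2) : Prop :=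
  Continuous M ∧
    (∀ k : ℕ, M (MvPowerSeries.X ((0 : Fin 2), k))
        = MvPowerSeries.X ((0 : Fin 2), k) + ((k.factorial : ℝ))⁻¹ • E2^[k] c) ∧
    (∀ k : ℕ, M (MvPowerSeries.X ((1 : Fin 2), k)) = MvPowerSeries.X ((1 : Fin 2), k))

open MvPowerSeries Finsupp

instance : T2Space PS2 := inferInstanceAs (T2Space ((I2 →₀ ℕ) → ℝ))

lemma coeff_E2 (f : PS2) (β : I2 →₀ ℕ) : coeff β (E2 f) = E2coeff f β := rfl

lemma E2_add (f g : PS2) : E2 (f + g) = E2 f + E2 g := by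
  ext β
  simp only [map_add, coeff_E2, E2coeff]
  rw [← Finset.sum_add_distrib]
  refine Finset.sum_congr rfl ?_
  rintro ⟨i, _ | k⟩ _
  · simp
  · simp only [map_add]; ring

lemma E2_smul (r : ℝ) (f : PS2) : E2 (r • f) = r • E2 f := by
  ext β
  simp only [coeff_E2, E2coeff, map_smul, smul_eq_mul, Finset.mul_sum]
  refine Finset.sum_congr rfl ?_
  rintro ⟨i, _ | k⟩ _
  · simp
  · simp only [map_smul, smul_eq_mul]; ring

def E2L : PS2 →ₗ[ℝ] PS2 where
  toFun := E2
  map_add' := E2_add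
  map_smul' := E2_smul

lemma E2_cont : Continuous E2 := by
  apply continuous_pi
  intro β
  have h : (fun f : PS2 => E2 f β) = fun f => E2coeff f β := rfl
  rw [h]
  unfold E2coeff
  apply continuous_finset_sum
  rintro ⟨i, _ | k⟩ _
  · exact continuous_const
  · exact continuous_const.mul (continuous_apply _)

lemma hasSum_mon (f : PS2) :
    HasSum (fun γ => monomial γ (coeff γ f)) f := by
  apply Pi.hasSum.mpr
  intro β
  have h : ∀ γ, (monomial γ (coeff γ f)) β = if β = γ then coeff γ f else 0 := by
    intro γ; exact coeff_monomial β γ _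
  simp_rw [h]
  have e : (fun γ => if β = γ then coeff γ f else 0)
      = fun γ => if γ = β then coeff β f else 0 := by
    funext γ
    by_cases h : β = γ
    · subst h; simp
    · simp [h, Ne.symm h]
  rw [e]
  exact hasSum_ite_eq β (coeff β f)

lemma eq_on_mon {T₁ T₂ : PS2 → PS2}
    (a₁ : ∀ x y : PS2, T₁ (x + y) = T₁ x + T₁ y)
    (a₂ : ∀ x y : PS2, T₂ (x + y) = T₂ x + T₂ y)
    (c₁ : Continuous T₁) (c₂ : Continuous T₂)
    (h : ∀ γ r, T₁ (monomial γ r) = T₂ (monomial γ r)) (f : PS2) : T₁ f = T₂ f := by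
  have h1 := (hasSum_mon f).map (AddMonoidHom.mk' T₁ a₁) c₁
  have h2 := (hasSum_mon f).map (AddMonoidHom.mk' T₂ a₂) c₂
  refine h1.unique ?_
  have e : (⇑(AddMonoidHom.mk' T₁ a₁) ∘ fun γ => monomial γ (coeff γ f))
       = (⇑(AddMonoidHom.mk' T₂ a₂) ∘ fun γ => monomial γ (coeff γ f)) := by
    funext γ; exact h γ _
  rw [e]; exact h2

lemma fs_eval (β : I2 →₀ ℕ) (p q x : I2) :
    ((β + single q 1 - single p 1 : I2 →₀ ℕ)) x
      = β x + (if q = x then 1 else 0) - (if p = x then 1 else 0) := by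
  simp [tsub_apply, Finsupp.add_apply, single_apply]

lemma shift_eval {β γ : I2 →₀ ℕ} {p q : I2} (hpq : q ≠ p)
    (h : β + single q 1 - single p 1 = γ) : γ q = β q + 1 := by
  have hx := (DFunLike.congr_fun h q).symm
  rw [fs_eval, if_pos rfl, if_neg (Ne.symm hpq)] at hx
  omega

lemma shift_inv {β γ : I2 →₀ ℕ} {p q : I2} (hpq : q ≠ p) (hβ : β p ≠ 0)
    (h : β + single q 1 - single p 1 = γ) : γ + single p 1 - single q 1 = β := by
  ext x
  have hx := DFunLike.congr_fun h x
  rw [fs_eval] at hx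
  rw [fs_eval]
  rcases eq_or_ne q x with h1 | h1 <;> rcases eq_or_ne p x with h2 | h2
  · exact absurd (h1.trans h2.symm) hpq
  · subst h1; rw [if_pos rfl, if_neg h2] at hx; rw [if_pos rfl, if_neg h2]; omega
  · subst h2; rw [if_pos rfl, if_neg h1] at hx; rw [if_pos rfl, if_neg h1]; omega
  · rw [if_neg h1, if_neg h2] at hx; rw [if_neg h1, if_neg h2]; omega

lemma E2_monomial (γ : I2 →₀ ℕ) (r : ℝ) :
    E2 (monomial γ r) = ∑ q ∈ γ.support,
      (((q.2 + 1) * γ q : ℕ) : ℝ) •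
        monomial (γ + single (q.1, q.2 + 1) 1 - single q 1) r := by
  classical
  ext β
  rw [coeff_E2, map_sum]
  have hR : ∀ q : I2,
      coeff β ((((q.2 + 1) * γ q : ℕ) : ℝ) •
        monomial (γ + single (q.1, q.2 + 1) 1 - single q 1) r)
      = if β = γ + single (q.1, q.2 + 1) 1 - single q 1
          then (((q.2 + 1) * γ q : ℕ) : ℝ) * r else 0 := by
    intro q
    rw [map_smul, smul_eq_mul, coeff_monomial]
    split_ifs <;> simp
  simp_rw [hR]
  have hL : E2coeff (monomial γ r) β
      = ∑ p ∈ β.support,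
          (if p.2 ≠ 0 ∧ β + single (p.1, p.2 - 1) 1 - single p 1 = γ
            then ((p.2 * (β (p.1, p.2 - 1) + 1) : ℕ) : ℝ) * r else 0) := by
    unfold E2coeff
    refine Finset.sum_congr rfl ?_
    rintro ⟨i, _ | k⟩ hp
    · simp
    · show _ * coeff _ (monomial γ r) = _
      rw [coeff_monomial]
      simp only [Nat.add_sub_cancel, Nat.succ_ne_zero, not_false_iff, true_and]
      by_cases h : β + single (i, k) 1 - single (i, k + 1) 1 = γ
      · rw [if_pos h, if_pos (show k + 1 ≠ 0 ∧ _ from ⟨Nat.succ_ne_zero k, h⟩)]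
      · rw [if_neg h, if_neg (fun hc : _ ∧ _ => h hc.2), mul_zero]
  rw [hL, ← Finset.sum_filter, ← Finset.sum_filter]
  refine Finset.sum_bij' (i := fun p _ => ((p.1, p.2 - 1) : I2))
    (j := fun q _ => ((q.1, q.2 + 1) : I2)) ?_ ?_ ?_ ?_ ?_
  · rintro ⟨i, k⟩ ha
    rw [Finset.mem_filter] at ha
    obtain ⟨hmem, hk, hsh⟩ := ha
    have hne : ((i, k - 1) : I2) ≠ (i, k) := by
      intro e; rw [Prod.ext_iff] at e; omega
    dsimp only
    rw [Finset.mem_filter]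
    constructor
    · rw [mem_support_iff]
      have := shift_eval hne hsh
      omega
    · have hβ : β (i, k) ≠ 0 := by rwa [mem_support_iff] at hmem
      have h2 := shift_inv hne hβ hsh
      have h3 : k - 1 + 1 = k := by omega
      simp only [h3]
      exact h2.symm
  · rintro ⟨i, k⟩ ha
    rw [Finset.mem_filter] at ha
    obtain ⟨hmem, hsh⟩ := ha
    have hne : ((i, k + 1) : I2) ≠ (i, k) := by
      intro e; rw [Prod.ext_iff] at e; omega
    dsimp only
    rw [Finset.mem_filter]
    constructor
    · rw [mem_support_iff]
      have := shift_eval hne hsh.symm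
      omega
    · refine ⟨Nat.succ_ne_zero k, ?_⟩
      have hγ : γ (i, k) ≠ 0 := by rwa [mem_support_iff] at hmem
      have h2 := shift_inv hne hγ hsh.symm
      simpa using h2
  · rintro ⟨i, k⟩ ha
    rw [Finset.mem_filter] at ha
    obtain ⟨_, hk, _⟩ := ha
    dsimp only
    simp only [Prod.mk.injEq]
    exact ⟨trivial, by omega⟩
  · rintro ⟨i, k⟩ _
    dsimp only
    simp
  · rintro ⟨i, k⟩ ha
    rw [Finset.mem_filter] at ha
    obtain ⟨hmem, hk, hsh⟩ := ha
    have hne : ((i, k - 1) : I2) ≠ (i, k) := by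
      intro e; rw [Prod.ext_iff] at e; omega
    have h1 := shift_eval hne hsh
    have h2 : k - 1 + 1 = k := by omega
    dsimp only
    simp only [h1, h2]

lemma add_shift {γ₁ γ₂ : I2 →₀ ℕ} {p q : I2} (h : γ₂ q ≠ 0) :
    γ₁ + (γ₂ + single p 1 - single q 1) = (γ₁ + γ₂) + single p 1 - single q 1 := by
  ext x
  rw [Finsupp.add_apply, fs_eval, fs_eval, Finsupp.add_apply]
  rcases eq_or_ne q x with h1 | h1 <;> rcases eq_or_ne p x with h2 | h2
  · rw [if_pos h1, if_pos h2]; subst h1; omega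
  · rw [if_pos h1, if_neg h2]; subst h1; omega
  · rw [if_neg h1, if_pos h2]; omega
  · rw [if_neg h1, if_neg h2]; omega

lemma mon_mul_E2_mon (γ₁ γ₂ : I2 →₀ ℕ) (r₁ r₂ : ℝ) (u : Finset I2) (hu : γ₂.support ⊆ u) :
    monomial γ₁ r₁ * E2 (monomial γ₂ r₂)
      = ∑ q ∈ u, (((q.2 + 1) * γ₂ q : ℕ) : ℝ) •
          monomial ((γ₁ + γ₂) + single (q.1, q.2 + 1) 1 - single q 1) (r₁ * r₂) := by
  rw [E2_monomial, Finset.mul_sum]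
  rw [← Finset.sum_subset hu (fun q _ hq => by
    rw [notMem_support_iff] at hq
    simp [hq])]
  refine Finset.sum_congr rfl fun q hq => ?_
  rw [mul_smul_comm, monomial_mul_monomial, add_shift (mem_support_iff.mp hq)]

lemma leib_mon (γ₁ γ₂ : I2 →₀ ℕ) (r₁ r₂ : ℝ) :
    E2 (monomial γ₁ r₁ * monomial γ₂ r₂)
      = monomial γ₁ r₁ * E2 (monomial γ₂ r₂)
        + monomial γ₂ r₂ * E2 (monomial γ₁ r₁) := by
  classical
  rw [monomial_mul_monomial, E2_monomial,
    mon_mul_E2_mon γ₁ γ₂ r₁ r₂ (γ₁.support ∪ γ₂.support) Finset.subset_union_right,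
    mon_mul_E2_mon γ₂ γ₁ r₂ r₁ (γ₁.support ∪ γ₂.support) Finset.subset_union_left]
  rw [Finset.sum_subset (Finsupp.support_add) (fun q _ hq => by
    rw [notMem_support_iff] at hq
    simp [hq])]
  rw [← Finset.sum_add_distrib]
  refine Finset.sum_congr rfl fun q hq => ?_
  have h1 : (((q.2 + 1) * (γ₁ + γ₂) q : ℕ) : ℝ)
      = (((q.2 + 1) * γ₂ q : ℕ) : ℝ) + (((q.2 + 1) * γ₁ q : ℕ) : ℝ) := by
    rw [Finsupp.add_apply]; push_cast; ring
  rw [h1, add_smul, add_comm γ₂ γ₁, mul_comm r₂ r₁]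

lemma cont_mul_left (g : PS2) : Continuous (fun f : PS2 => g * f) := by
  apply continuous_pi
  intro β
  have h : (fun f : PS2 => (g * f) β)
      = fun f => ∑ p ∈ Finset.HasAntidiagonal.antidiagonal β, coeff p.1 g * coeff p.2 f := by
    funext f; exact coeff_mul β g f
  rw [h]
  exact continuous_finset_sum _ fun p _ => continuous_const.mul (continuous_apply _)

lemma cont_mul_right (g : PS2) : Continuous (fun f : PS2 => f * g) := by
  have h : (fun f : PS2 => f * g) = fun f : PS2 => g * f := by
    funext f; exact mul_comm f g
  rw [h]; exact cont_mul_left g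

instance : ContinuousAdd PS2 := inferInstanceAs (ContinuousAdd ((I2 →₀ ℕ) → ℝ))

lemma leib_aux (γ₂ : I2 →₀ ℕ) (r₂ : ℝ) (f : PS2) :
    E2 (f * monomial γ₂ r₂)
      = f * E2 (monomial γ₂ r₂) + monomial γ₂ r₂ * E2 f := by
  set m := monomial γ₂ r₂ with hm
  exact eq_on_mon (T₁ := fun f : PS2 => E2 (f * m))
    (T₂ := fun f : PS2 => f * E2 m + m * E2 f)
    (fun x y => by rw [add_mul, E2_add])
    (fun x y => by rw [E2_add]; ring)
    (E2_cont.comp (cont_mul_right m))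
    ((cont_mul_right (E2 m)).add ((cont_mul_left m).comp E2_cont))
    (fun γ r => by rw [hm]; exact leib_mon γ γ₂ r r₂) f

lemma leibniz (f g : PS2) : E2 (f * g) = f * E2 g + g * E2 f := by
  exact eq_on_mon (T₁ := fun g : PS2 => E2 (f * g))
    (T₂ := fun g : PS2 => f * E2 g + g * E2 f)
    (fun x y => by rw [mul_add, E2_add])
    (fun x y => by rw [E2_add]; ring)
    (E2_cont.comp (cont_mul_left f))
    (((cont_mul_left f).comp E2_cont).add (cont_mul_right (E2 f)))
    (fun γ r => leib_aux γ r f) g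

lemma single_shift (q : I2) :
    single q 1 + single (q.1, q.2 + 1) 1 - single q 1
      = (single (q.1, q.2 + 1) 1 : I2 →₀ ℕ) := by
  have hne : q ≠ (q.1, q.2 + 1) := by intro e; rw [Prod.ext_iff] at e; omega
  ext x
  rw [fs_eval, single_apply, single_apply]
  rcases eq_or_ne q x with h1 | h1 <;> rcases eq_or_ne (q.1, q.2 + 1) x with h2 | h2
  · exact absurd (h1.trans h2.symm) hne
  · rw [if_pos h1, if_neg h2]; try omega
  · rw [if_neg h1, if_pos h2]; try omega
  · rw [if_neg h1, if_neg h2]; try omega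

lemma E2_X (i : Fin 2) (k : ℕ) :
    E2 (X (i, k)) = (((k + 1 : ℕ) : ℝ)) • X (i, k + 1) := by
  rw [X_def, E2_monomial]
  rw [support_single_ne_zero _ one_ne_zero, Finset.sum_singleton]
  rw [single_eq_same, single_shift, ← X_def]
  norm_num

lemma E2_C (r : ℝ) : E2 ((C : ℝ →+* PS2) r) = 0 := by
  rw [← monomial_zero_eq_C_apply, E2_monomial]
  simp

/-- **Transformation maps for renormalization** (Lemma 6.5). -/
theorem stmt13 (c : PS2) (hc : OnlyZ1 c) (M : PS2 →ₐ[ℝ] PS2) (hM : IsRenorm M c) :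
    (∀ f : PS2, M (E2 f) = E2 (M f)) ∧
    (∀ π₁ π₂ : PS2, M (π₁ * E2 π₂) = M π₁ * E2 (M π₂)) ∧
    (∀ c' : PS2, OnlyZ1 c' → ∀ M' : PS2 →ₐ[ℝ] PS2, IsRenorm M' c' →
        IsRenorm (M.comp M') (c + c')) := by
  obtain ⟨hMc, hM0, hM1⟩ := hM
  -- M commutes with E2 on the variables
  have hCr : ∀ r : ℝ, M ((C : ℝ →+* PS2) r) = (C : ℝ →+* PS2) r := by
    intro r
    have : ((C : ℝ →+* PS2) r : PS2) = algebraMap ℝ PS2 r := by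
      rw [MvPowerSeries.algebraMap_apply]; simp
    rw [this, M.commutes]
  have hX0 : ∀ k : ℕ, M (E2 (X ((0 : Fin 2), k))) = E2 (M (X ((0 : Fin 2), k))) := by
    intro k
    · rw [E2_X, map_smul, hM0 k, hM0 (k + 1), E2_add, E2_smul, E2_X]
      rw [← Function.iterate_succ_apply' E2 k c]
      rw [smul_add, smul_smul]
      congr 1
      rw [Nat.factorial_succ]
      push_cast
      rw [mul_inv, ← mul_assoc, mul_inv_cancel₀ (by positivity), one_mul]
  have hX1 : ∀ k : ℕ, M (E2 (X ((1 : Fin 2), k))) = E2 (M (X ((1 : Fin 2), k))) := by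
    intro k
    rw [E2_X, map_smul, hM1 k, hM1 (k + 1), E2_X]
  have hX : ∀ p : I2, M (E2 (X p)) = E2 (M (X p)) := by
    rintro ⟨i, k⟩
    fin_cases i
    · exact hX0 k
    · exact hX1 k
  -- closure of the commuting property
  have hmul : ∀ f g : PS2, M (E2 f) = E2 (M f) → M (E2 g) = E2 (M g) →
      M (E2 (f * g)) = E2 (M (f * g)) := by
    intro f g hf hg
    rw [leibniz, map_add, map_mul, map_mul, hf, hg, map_mul, leibniz]
  have hXpow : ∀ (p : I2) (n : ℕ), M (E2 ((X p : PS2) ^ n)) = E2 (M ((X p : PS2) ^ n)) := by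
    intro p n
    induction n with
    | zero =>
        simp only [pow_zero]
        have h1 : (1 : PS2) = (C : ℝ →+* PS2) 1 := (map_one ((C : ℝ →+* PS2))).symm
        rw [h1, E2_C, map_zero, hCr, E2_C]
    | succ n ih =>
        rw [pow_succ]
        exact hmul _ _ ih (hX p)
  have hmono : ∀ (γ : I2 →₀ ℕ) (r : ℝ), M (E2 (monomial γ r)) = E2 (M (monomial γ r)) := by
    intro γ
    induction γ using Finsupp.induction with
    | zero =>
        intro r
        rw [monomial_zero_eq_C_apply, E2_C, map_zero, hCr, E2_C]
    | single_add p n τ hp hn ih =>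
        intro r
        have h1 : (monomial (single p n + τ) r : PS2) = (X p : PS2) ^ n * monomial τ r := by
          rw [X_pow_eq, monomial_mul_monomial, one_mul]
        rw [h1]
        exact hmul _ _ (hXpow p n) (ih r)
  have part1 : ∀ f : PS2, M (E2 f) = E2 (M f) := by
    intro f
    exact eq_on_mon (T₁ := fun f : PS2 => M (E2 f)) (T₂ := fun f : PS2 => E2 (M f))
      (fun x y => by rw [E2_add, map_add])
      (fun x y => by rw [map_add, E2_add])
      (hMc.comp E2_cont)
      (E2_cont.comp hMc)
      (fun γ r => hmono γ r) f
  refine ⟨part1, ?_, ?_⟩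
  · intro π₁ π₂
    rw [map_mul, part1]
  · intro c' hc' M' hM'
    obtain ⟨hM'c, hM'0, hM'1⟩ := hM'
    -- M fixes series supported on z^1 variables
    have hfix_mon : ∀ (γ : I2 →₀ ℕ), (∀ k, γ (0, k) = 0) → ∀ r : ℝ,
        M (monomial γ r) = monomial γ r := by
      intro γ
      induction γ using Finsupp.induction with
      | zero =>
          intro _ r
          rw [monomial_zero_eq_C_apply, hCr]
      | single_add p n τ hp hn ih =>
          intro hsupp r
          have hτ : ∀ k, τ (0, k) = 0 := by
            intro k
            have := hsupp k
            rw [Finsupp.add_apply] at this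
            omega
          have hpfst : p.1 = 1 := by
            by_cases hi : p.1 = 0
            · exfalso
              have h4 := hsupp p.2
              rw [Finsupp.add_apply] at h4
              have hps : p = ((0 : Fin 2), p.2) := Prod.ext hi rfl
              rw [← hps, single_eq_same] at h4
              omega
            · have h2 := p.1.isLt
              have h3 : (p.1 : ℕ) ≠ 0 := fun e => hi (Fin.ext e)
              exact Fin.ext (by omega)
          have h1 : (monomial (single p n + τ) r : PS2) = (X p : PS2) ^ n * monomial τ r := by
            rw [X_pow_eq, monomial_mul_monomial, one_mul]
          rw [h1, map_mul, map_pow]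
          have hXp : M (X p) = X p := by
            have hps : p = ((1 : Fin 2), p.2) := Prod.ext hpfst rfl
            rw [hps]
            exact hM1 p.2
          rw [hXp, ih hτ r]
    have hfix : ∀ d : PS2, OnlyZ1 d → M d = d := by
      intro d hd
      have h1 := (hasSum_mon d).map (AddMonoidHom.mk' (⇑M) (map_add M)) hMc
      have e : (⇑(AddMonoidHom.mk' (⇑M) (map_add M)) ∘ fun γ => monomial γ (coeff γ d))
          = fun γ => monomial γ (coeff γ d) := by
        funext γ
        by_cases h : ∃ k, γ (0, k) ≠ 0
        · have h0 := hd γ h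
          show M _ = _
          simp [h0]
        · push_neg at h
          exact hfix_mon γ (fun k => h k) _
      rw [e] at h1
      exact h1.unique (hasSum_mon d)
    have hMEk : ∀ k : ℕ, M (E2^[k] c') = E2^[k] c' := by
      intro k
      induction k with
      | zero => exact hfix c' hc'
      | succ k ih =>
          rw [Function.iterate_succ_apply', part1, ih]
    have hEk_add : ∀ k : ℕ, E2^[k] (c + c') = E2^[k] c + E2^[k] c' := by
      intro k
      induction k with
      | zero => rfl
      | succ k ih => rw [Function.iterate_succ_apply', Function.iterate_succ_apply',
          Function.iterate_succ_apply', ih, E2_add]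
    refine ⟨?_, ?_, ?_⟩
    · show Continuous (⇑M ∘ ⇑M')
      exact hMc.comp hM'c
    · intro k
      show M (M' (X ((0 : Fin 2), k))) = _
      rw [hM'0 k, map_add, hM0 k, map_smul, hMEk k, hEk_add k, smul_add]
      abel
    · intro k
      show M (M' (X ((1 : Fin 2), k))) = _
      rw [hM'1 k, hM1 k]

end
end

section
/- Summation identity for multi-index decompositions (Appendix Lemma A.1). Let ι be a type, V and W real vector spaces, A : (ι →₀ ℕ) → V and B : (ι →₀ ℕ) → W arbitrary families, J a multi-index over ι, and i ∈ ι. Then in V ⊗_ℝ W: (J(i)+1) · Σ_{J′+J″ = J+e_i} (1/J′!)·A(J′) ⊗ (1/J″!)·B(J″) = Σ_{J′+J″ = J} [ (1/J′!)·A(J′+e_i) ⊗ (1/J″!)·B(J″) + (1/J′!)·A(J′) ⊗ (1/J″!)·B(J″+e_i) ], where both sums run over the (finite) sets of ordered pairs of multi-indices (J′,J″) summing to the indicated multi-index. -/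
open scoped TensorProduct

/-- the factorial `J! = Π_j J(j)!` of a multi-index. -/
def mfact {ι : Type*} (J : ι →₀ ℕ) : ℕ := J.prod fun _ n => n.factorial

lemma mfact_pos {ι : Type*} (J : ι →₀ ℕ) : 0 < mfact J :=
  Finset.prod_pos fun _ _ => Nat.factorial_pos _

lemma mfact_add_single {ι : Type*} [DecidableEq ι] (K : ι →₀ ℕ) (i : ι) :
    mfact (K + Finsupp.single i 1) = (K i + 1) * mfact K := by
  classical
  set s := (K + Finsupp.single i 1).support ∪ K.support ∪ {i} with hs
  have h1 : (K + Finsupp.single i 1).support ⊆ s := by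
    intro x hx; simp [hs, hx]
  have h2 : K.support ⊆ s := by intro x hx; simp [hs, hx]
  have hi : i ∈ s := by simp [hs]
  rw [mfact, mfact,
    Finsupp.prod_of_support_subset _ h1 (fun _ n => n.factorial) (fun _ _ => rfl),
    Finsupp.prod_of_support_subset _ h2 (fun _ n => n.factorial) (fun _ _ => rfl),
    ← Finset.mul_prod_erase _ _ hi, ← Finset.mul_prod_erase _ _ hi]
  have hKi : (K + Finsupp.single i 1 : ι →₀ ℕ) i = K i + 1 := by simp
  rw [hKi, Nat.factorial_succ, mul_assoc]
  congr 1
  congr 1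
  apply Finset.prod_congr rfl
  intro j hj
  have : j ≠ i := Finset.ne_of_mem_erase hj
  simp [Finsupp.single_apply, this, Ne.symm this]

/-- shift the first component of the antidiagonal sum. -/
lemma sum_shift_fst {ι M : Type*} [DecidableEq ι] [AddCommMonoid M] (J : ι →₀ ℕ) (i : ι)
    (f : ((ι →₀ ℕ) × (ι →₀ ℕ)) → M)
    (hf : ∀ p : (ι →₀ ℕ) × (ι →₀ ℕ),
      p ∈ Finset.HasAntidiagonal.antidiagonal (J + Finsupp.single i 1) → p.1 i = 0 → f p = 0) :
    ∑ p ∈ Finset.HasAntidiagonal.antidiagonal (J + Finsupp.single i 1), f p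
      = ∑ q ∈ Finset.HasAntidiagonal.antidiagonal J, f (q.1 + Finsupp.single i 1, q.2) := by
  classical
  rw [← Finset.sum_filter_of_ne (p := fun p => p.1 i ≠ 0)
    (fun p hp h => fun hc => h (hf p hp hc))]
  refine Finset.sum_bij' (fun p _ => (p.1 - Finsupp.single i 1, p.2))
    (fun q _ => (q.1 + Finsupp.single i 1, q.2)) ?_ ?_ ?_ ?_ ?_
  · intro p hp
    simp only [Finset.mem_filter, Finset.HasAntidiagonal.mem_antidiagonal] at hp
    obtain ⟨hp1, hp2⟩ := hp
    have hle : Finsupp.single i 1 ≤ p.1 :=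
      Finsupp.single_le_iff.mpr (Nat.one_le_iff_ne_zero.mpr hp2)
    rw [Finset.HasAntidiagonal.mem_antidiagonal]
    ext j
    have e1 := DFunLike.congr_fun hp1 j
    have e2 : Finsupp.single i 1 j ≤ p.1 j := hle j
    simp only [Finsupp.coe_add, Pi.add_apply] at e1 ⊢
    simp only [Finsupp.coe_tsub, Pi.sub_apply]
    omega
  · intro q hq
    simp only [Finset.HasAntidiagonal.mem_antidiagonal] at hq
    simp only [Finset.mem_filter, Finset.HasAntidiagonal.mem_antidiagonal]
    constructor
    · rw [← hq]; ext j; simp only [Finsupp.coe_add, Pi.add_apply]; ring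
    · simp
  · intro p hp
    simp only [Finset.mem_filter, Finset.HasAntidiagonal.mem_antidiagonal] at hp
    have hle : Finsupp.single i 1 ≤ p.1 :=
      Finsupp.single_le_iff.mpr (Nat.one_le_iff_ne_zero.mpr hp.2)
    simp [tsub_add_cancel_of_le hle]
  · intro q hq; simp
  · intro p hp
    simp only [Finset.mem_filter, Finset.HasAntidiagonal.mem_antidiagonal] at hp
    have hle : Finsupp.single i 1 ≤ p.1 :=
      Finsupp.single_le_iff.mpr (Nat.one_le_iff_ne_zero.mpr hp.2)
    rw [tsub_add_cancel_of_le hle]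

/-- shift the second component of the antidiagonal sum. -/
lemma sum_shift_snd {ι M : Type*} [DecidableEq ι] [AddCommMonoid M] (J : ι →₀ ℕ) (i : ι)
    (f : ((ι →₀ ℕ) × (ι →₀ ℕ)) → M)
    (hf : ∀ p : (ι →₀ ℕ) × (ι →₀ ℕ),
      p ∈ Finset.HasAntidiagonal.antidiagonal (J + Finsupp.single i 1) → p.2 i = 0 → f p = 0) :
    ∑ p ∈ Finset.HasAntidiagonal.antidiagonal (J + Finsupp.single i 1), f p
      = ∑ q ∈ Finset.HasAntidiagonal.antidiagonal J, f (q.1, q.2 + Finsupp.single i 1) := by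
  classical
  rw [← Finset.sum_filter_of_ne (p := fun p => p.2 i ≠ 0)
    (fun p hp h => fun hc => h (hf p hp hc))]
  refine Finset.sum_bij' (fun p _ => (p.1, p.2 - Finsupp.single i 1))
    (fun q _ => (q.1, q.2 + Finsupp.single i 1)) ?_ ?_ ?_ ?_ ?_
  · intro p hp
    simp only [Finset.mem_filter, Finset.HasAntidiagonal.mem_antidiagonal] at hp
    obtain ⟨hp1, hp2⟩ := hp
    have hle : Finsupp.single i 1 ≤ p.2 :=
      Finsupp.single_le_iff.mpr (Nat.one_le_iff_ne_zero.mpr hp2)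
    rw [Finset.HasAntidiagonal.mem_antidiagonal]
    ext j
    have e1 := DFunLike.congr_fun hp1 j
    have e2 : Finsupp.single i 1 j ≤ p.2 j := hle j
    simp only [Finsupp.coe_add, Pi.add_apply] at e1 ⊢
    simp only [Finsupp.coe_tsub, Pi.sub_apply]
    omega
  · intro q hq
    simp only [Finset.HasAntidiagonal.mem_antidiagonal] at hq
    simp only [Finset.mem_filter, Finset.HasAntidiagonal.mem_antidiagonal]
    constructor
    · rw [← hq]; ext j; simp only [Finsupp.coe_add, Pi.add_apply]; ring
    · simp
  · intro p hp
    simp only [Finset.mem_filter, Finset.HasAntidiagonal.mem_antidiagonal] at hp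
    have hle : Finsupp.single i 1 ≤ p.2 :=
      Finsupp.single_le_iff.mpr (Nat.one_le_iff_ne_zero.mpr hp.2)
    simp [tsub_add_cancel_of_le hle]
  · intro q hq; simp
  · intro p hp
    simp only [Finset.mem_filter, Finset.HasAntidiagonal.mem_antidiagonal] at hp
    have hle : Finsupp.single i 1 ≤ p.2 :=
      Finsupp.single_le_iff.mpr (Nat.one_le_iff_ne_zero.mpr hp.2)
    rw [tsub_add_cancel_of_le hle]

/-- **Summation identity for multi-index decompositions** (Appendix Lemma A.1). -/
theorem stmt14 {ι V W : Type*} [DecidableEq ι] [AddCommGroup V] [Module ℝ V]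
    [AddCommGroup W] [Module ℝ W]
    (A : (ι →₀ ℕ) → V) (B : (ι →₀ ℕ) → W) (J : ι →₀ ℕ) (i : ι) :
    (((J i : ℕ) + 1 : ℕ) : ℝ) •
        ∑ p ∈ Finset.HasAntidiagonal.antidiagonal (J + Finsupp.single i 1),
          ((1 / (mfact p.1 : ℝ)) • A p.1) ⊗ₜ[ℝ] ((1 / (mfact p.2 : ℝ)) • B p.2)
      = ∑ p ∈ Finset.HasAntidiagonal.antidiagonal J,
          (((1 / (mfact p.1 : ℝ)) • A (p.1 + Finsupp.single i 1)) ⊗ₜ[ℝ]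
              ((1 / (mfact p.2 : ℝ)) • B p.2)
            + ((1 / (mfact p.1 : ℝ)) • A p.1) ⊗ₜ[ℝ]
              ((1 / (mfact p.2 : ℝ)) • B (p.2 + Finsupp.single i 1))) := by
  classical
  set f : ((ι →₀ ℕ) × (ι →₀ ℕ)) → V ⊗[ℝ] W := fun p =>
    ((1 / (mfact p.1 : ℝ)) • A p.1) ⊗ₜ[ℝ] ((1 / (mfact p.2 : ℝ)) • B p.2) with hfdef
  rw [Finset.smul_sum]
  have key : ∀ p ∈ Finset.HasAntidiagonal.antidiagonal (J + Finsupp.single i 1),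
      (((J i : ℕ) + 1 : ℕ) : ℝ) • f p = ((p.1 i : ℝ) • f p) + ((p.2 i : ℝ) • f p) := by
    intro p hp
    rw [Finset.HasAntidiagonal.mem_antidiagonal] at hp
    have h : (p.1 i + p.2 i : ℕ) = J i + 1 := by
      have := DFunLike.congr_fun hp i; simpa using this
    rw [← add_smul]
    congr 1
    push_cast [← h]
    ring
  rw [Finset.sum_congr rfl key, Finset.sum_add_distrib, Finset.sum_add_distrib]
  congr 1
  · rw [sum_shift_fst J i (fun p => (p.1 i : ℝ) • f p) (fun p _ h => by simp [h])]
    apply Finset.sum_congr rfl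
    intro q _
    simp only [hfdef]
    have h1 : (q.1 + Finsupp.single i 1 : ι →₀ ℕ) i = q.1 i + 1 := by simp
    rw [TensorProduct.smul_tmul', smul_smul, h1, mfact_add_single]
    congr 2
    have h0 : (mfact q.1 : ℝ) ≠ 0 := Nat.cast_ne_zero.mpr (mfact_pos q.1).ne'
    field_simp
    norm_cast
  · rw [sum_shift_snd J i (fun p => (p.2 i : ℝ) • f p) (fun p _ h => by simp [h])]
    apply Finset.sum_congr rfl
    intro q _
    simp only [hfdef]
    have h1 : (q.2 + Finsupp.single i 1 : ι →₀ ℕ) i = q.2 i + 1 := by simp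
    rw [← TensorProduct.tmul_smul, smul_smul, h1, mfact_add_single]
    congr 2
    have h0 : (mfact q.2 : ℝ) ≠ 0 := Nat.cast_ne_zero.mpr (mfact_pos q.2).ne'
    field_simp
    norm_cast
end
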